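/- arXiv:2601.03488 — 4 statements merged into one kernel-verified Lean document; each statement's English description precedes it below -/
import Mathlib

section
/- For every integer n ≥ 3, the domination number of the prism graph G_n = C_n □ P_2 equals n/2 if n ≡ 0 (mod 4), equals (n+1)/2 if n is odd (i.e., n ≡ 1 or 3 (mod 4)), and equals n/2 + 1 if n ≡ 2 (mod 4). -/
/-- The prism graph `C_n □ P_2` on vertex set `ZMod n × Fin 2`:
`(i,r)` is adjacent to `(i±1,r)` and to `(i,1-r)`. -/
def prismGraph (n : ℕ) : SimpleGraph (ZMod n × Fin 2) where
  Adj u v := u ≠ v ∧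
    ((u.1 = v.1 ∧ u.2 ≠ v.2) ∨
     (u.2 = v.2 ∧ (u.1 = v.1 + 1 ∨ v.1 = u.1 + 1)))
  symm := by
    constructor
    rintro ⟨i, r⟩ ⟨j, s⟩ ⟨hne, h⟩
    refine ⟨Ne.symm hne, ?_⟩
    rcases h with ⟨h1, h2⟩ | ⟨h1, h2⟩
    · exact Or.inl ⟨h1.symm, h2.symm⟩
    · exact Or.inr ⟨h1.symm, h2.symm⟩
  loopless := by
    constructor
    rintro ⟨i, r⟩ ⟨hne, -⟩
    exact hne rfl

/-- `S` is a dominating set of the prism graph: every vertex is in `S`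
or adjacent to a vertex of `S`. -/
def IsDominatingSet (n : ℕ) (S : Set (ZMod n × Fin 2)) : Prop :=
  ∀ v, v ∈ S ∨ ∃ u ∈ S, (prismGraph n).Adj u v

/-- The domination number `γ(G_n)`: minimum cardinality of a dominating set. -/
noncomputable def domNum (n : ℕ) : ℕ :=
  sInf {k | ∃ S : Finset (ZMod n × Fin 2), S.card = k ∧ IsDominatingSet n ↑S}

/-- The dominion `ζ(G_n)`: the number of dominating sets of cardinality `γ(G_n)`. -/
noncomputable def dominion (n : ℕ) : ℕ :=
  {S : Finset (ZMod n × Fin 2) | S.card = domNum n ∧ IsDominatingSet n ↑S}.ncard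

/-- The set of vertices encoded by a word `w : ZMod n → Bool × Bool`;
the first bit of `w i` records membership of the top vertex `(i,0)`,
the second bit that of the bottom vertex `(i,1)`. -/
def wordSet (n : ℕ) (w : ZMod n → Bool × Bool) : Set (ZMod n × Fin 2) :=
  {v | (if v.2 = 0 then (w v.1).1 else (w v.1).2) = true}

/-- A minimum dominating word: it encodes a dominating set of cardinality `γ(G_n)`. -/
def IsMinDomWord (n : ℕ) (w : ZMod n → Bool × Bool) : Prop :=
  IsDominatingSet n (wordSet n w) ∧ (wordSet n w).ncard = domNum n

def letC : Bool × Bool := (false, false)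
def letA : Bool × Bool := (true, false)
def letB : Bool × Bool := (false, true)
def letD : Bool × Bool := (true, true)

namespace PrismProof

open Finset

lemma fin2_ne_iff (r s : Fin 2) : r ≠ s ↔ s = r + 1 := by fin_cases r <;> fin_cases s <;> decide

lemma fin2_add_two (r : Fin 2) : r + 1 + 1 = r := by fin_cases r <;> rfl

def N (n : ℕ) (u : ZMod n × Fin 2) : Finset (ZMod n × Fin 2) :=
  {u, (u.1 + 1, u.2), (u.1 - 1, u.2), (u.1, u.2 + 1)}

lemma mem_N_of {n : ℕ} {u v : ZMod n × Fin 2}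
    (h : (prismGraph n).Adj u v ∨ u = v) : v ∈ N n u := by
  rcases h with ⟨hne, h⟩ | rfl
  · rcases h with ⟨h1, h2⟩ | ⟨h1, h2⟩
    · have h2' : v.2 = u.2 + 1 := (fin2_ne_iff u.2 v.2).mp h2
      simp [N, Prod.ext_iff]; tauto
    · rcases h2 with h2 | h2
      · have : v.1 = u.1 - 1 := by rw [h2]; ring
        simp [N, Prod.ext_iff]; tauto
      · simp [N, Prod.ext_iff]; tauto
  · simp [N]

lemma self_mem_N {n : ℕ} (u : ZMod n × Fin 2) : u ∈ N n u := by simp [N]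

lemma mem_N_comm {n : ℕ} {u v : ZMod n × Fin 2} (h : v ∈ N n u) : u ∈ N n v := by
  obtain ⟨i, r⟩ := u
  simp only [N, mem_insert, mem_singleton] at h ⊢
  rcases h with rfl | h | h | h
  · left; rfl
  · rw [h]; right; right; left
    simp [add_sub_cancel_right]
  · rw [h]; right; left
    simp [sub_add_cancel]
  · rw [h]; right; right; right
    simp [fin2_add_two]

lemma card_N_le {n : ℕ} (u : ZMod n × Fin 2) : (N n u).card ≤ 4 := by
  refine le_trans (card_insert_le _ _) ?_
  refine Nat.succ_le_succ (le_trans (card_insert_le _ _) ?_)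
  refine Nat.succ_le_succ (le_trans (card_insert_le _ _) ?_)
  simp

lemma card_lower {n : ℕ} (hn : 3 ≤ n) (S : Finset (ZMod n × Fin 2))
    (hS : IsDominatingSet n ↑S) : 2 * n ≤ 4 * S.card := by
  haveI : NeZero n := ⟨by omega⟩
  have hsub : (univ : Finset (ZMod n × Fin 2)) ⊆ S.biUnion (N n) := by
    intro v _
    rcases hS v with hv | ⟨u, hu, hadj⟩
    · exact mem_biUnion.mpr ⟨v, hv, mem_N_of (Or.inr rfl)⟩
    · exact mem_biUnion.mpr ⟨u, hu, mem_N_of (Or.inl hadj)⟩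
  have h1 : (univ : Finset (ZMod n × Fin 2)).card = 2 * n := by
    simp [Fintype.card_prod, ZMod.card]
    ring
  have h2 := card_le_card hsub
  have h3 : (S.biUnion (N n)).card ≤ ∑ u ∈ S, (N n u).card := card_biUnion_le
  have h4 : ∑ u ∈ S, (N n u).card ≤ ∑ _u ∈ S, 4 := sum_le_sum (fun u _ => card_N_le u)
  simp at h4
  omega

section B

variable {n : ℕ}

lemma unique_dominator (hn : 3 ≤ n) (h4 : n % 4 = 2) (S : Finset (ZMod n × Fin 2))
    (hS : IsDominatingSet n ↑S) (hcard : S.card = n / 2) :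
    ∀ v, (S.filter (fun u => v ∈ N n u)).card = 1 := by
  haveI : NeZero n := ⟨by omega⟩
  have hdom : ∀ v : ZMod n × Fin 2, 1 ≤ (S.filter (fun u => v ∈ N n u)).card := by
    intro v
    rcases hS v with hv | ⟨u, hu, hadj⟩
    · exact card_pos.mpr ⟨v, mem_filter.mpr ⟨hv, self_mem_N v⟩⟩
    · exact card_pos.mpr ⟨u, mem_filter.mpr ⟨hu, mem_N_of (Or.inl hadj)⟩⟩
  have hswap : ∑ v : ZMod n × Fin 2, (S.filter (fun u => v ∈ N n u)).card
      = ∑ u ∈ S, (N n u).card := by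
    have : ∀ u : ZMod n × Fin 2, (univ.filter (fun v => v ∈ N n u)) = N n u := by
      intro u; ext w; simp
    calc ∑ v : ZMod n × Fin 2, (S.filter (fun u => v ∈ N n u)).card
        = ∑ v : ZMod n × Fin 2, ∑ u ∈ S, if v ∈ N n u then 1 else 0 := by
          refine Finset.sum_congr rfl fun v _ => ?_
          rw [Finset.card_filter]
      _ = ∑ u ∈ S, ∑ v : ZMod n × Fin 2, if v ∈ N n u then 1 else 0 := Finset.sum_comm
      _ = ∑ u ∈ S, (univ.filter (fun v => v ∈ N n u)).card := by
          refine Finset.sum_congr rfl fun u _ => ?_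
          rw [Finset.card_filter]
      _ = ∑ u ∈ S, (N n u).card := by simp [this]
  have hub : ∑ u ∈ S, (N n u).card ≤ 2 * n := by
    have : ∑ u ∈ S, (N n u).card ≤ ∑ _u ∈ S, 4 := sum_le_sum (fun u _ => card_N_le u)
    simp [hcard] at this
    omega
  have hcardU : (univ : Finset (ZMod n × Fin 2)).card = 2 * n := by
    simp [Fintype.card_prod, ZMod.card]; ring
  intro v
  by_contra hne
  have h2 : 2 ≤ (S.filter (fun u => v ∈ N n u)).card := by
    have := hdom v; omega
  have : ∑ w : ZMod n × Fin 2, 1 < ∑ w : ZMod n × Fin 2, (S.filter (fun u => w ∈ N n u)).card := by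
    apply Finset.sum_lt_sum (fun w _ => hdom w) ⟨v, mem_univ v, by omega⟩
  simp [hcardU] at this
  omega

open Fin.NatCast in
lemma no_half (hn : 3 ≤ n) (h4 : n % 4 = 2) (S : Finset (ZMod n × Fin 2))
    (hS : IsDominatingSet n ↑S) (hcard : S.card = n / 2) : False := by
  haveI : NeZero n := ⟨by omega⟩
  have huniq := unique_dominator hn h4 S hS hcard
  have huu : ∀ (v u u' : ZMod n × Fin 2), u ∈ S → u' ∈ S → v ∈ N n u → v ∈ N n u' → u = u' := by
    intro v u u' hu hu' h h'
    by_contra hne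
    have hsub : ({u, u'} : Finset _) ⊆ S.filter (fun w => v ∈ N n w) := by
      intro w hw
      simp only [mem_insert, mem_singleton] at hw
      rcases hw with rfl | rfl
      · exact mem_filter.mpr ⟨hu, h⟩
      · exact mem_filter.mpr ⟨hu', h'⟩
    have := card_le_card hsub
    rw [card_pair hne, huniq v] at this
    omega
  have h1 : (1 : ZMod n) ≠ 0 := by
    intro h
    have h' : ((1:ℕ) : ZMod n).val = ((0:ℕ) : ZMod n).val := by
      rw [Nat.cast_one, Nat.cast_zero, h]
    rw [ZMod.val_cast_of_lt (by omega), ZMod.val_cast_of_lt (by omega)] at h'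
    omega
  have hne1 : ∀ i : ZMod n, i ≠ i + 1 := by
    intro i h
    apply h1
    have h' : i + 1 = i + 0 := by rw [add_zero, ← h]
    exact add_left_cancel h'
  have hr1 : ∀ r : Fin 2, r ≠ r + 1 := by intro r; fin_cases r <;> decide
  have step : ∀ (i : ZMod n) (r : Fin 2), (i, r) ∈ S → (i + 2, r + 1) ∈ S := by
    intro i r hir
    obtain ⟨u, hu, hvN⟩ : ∃ u ∈ S, ((i + 1, r + 1) : ZMod n × Fin 2) ∈ N n u := by
      rcases hS (i + 1, r + 1) with hv | ⟨u, hu, hadj⟩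
      · exact ⟨_, hv, self_mem_N _⟩
      · exact ⟨u, hu, mem_N_of (Or.inl hadj)⟩
    have hu' := mem_N_comm hvN
    simp only [N, mem_insert, mem_singleton] at hu'
    rcases hu' with rfl | h | h | h
    · exfalso
      have e1 : ((i+1, r) : ZMod n × Fin 2) ∈ N n (i, r) := by simp [N]
      have e2 : ((i+1, r) : ZMod n × Fin 2) ∈ N n (i+1, r+1) := by
        simp [N, fin2_add_two]
      have := huu _ _ _ hir hu e1 e2
      exact hne1 i (congrArg Prod.fst this)
    · rw [h] at hu
      convert hu using 2
      ring
    · exfalso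
      rw [h] at hu
      have hu2 : ((i, r+1) : ZMod n × Fin 2) ∈ S := by
        convert hu using 2; ring
      have e1 : ((i, r) : ZMod n × Fin 2) ∈ N n (i, r) := self_mem_N _
      have e2 : ((i, r) : ZMod n × Fin 2) ∈ N n (i, r+1) := by
        simp [N, fin2_add_two]
      have := huu _ _ _ hir hu2 e1 e2
      exact hr1 r (congrArg Prod.snd this)
    · exfalso
      rw [h] at hu
      have hu2 : ((i+1, r) : ZMod n × Fin 2) ∈ S := by
        rwa [fin2_add_two] at hu
      have e1 : ((i+1, r) : ZMod n × Fin 2) ∈ N n (i+1, r) := self_mem_N _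
      have e2 : ((i+1, r) : ZMod n × Fin 2) ∈ N n (i, r) := by simp [N]
      have := huu _ _ _ hu2 hir e1 e2
      exact hne1 i (congrArg Prod.fst this).symm
  obtain ⟨⟨i, r⟩, hir⟩ : ∃ u : ZMod n × Fin 2, u ∈ S := by
    have hpos : 0 < S.card := by omega
    exact card_pos.mp hpos
  have iter : ∀ k : ℕ, ((i + ((2*k : ℕ) : ZMod n), r + ((k : ℕ) : Fin 2)) : ZMod n × Fin 2) ∈ S := by
    intro k
    induction k with
    | zero => simpa using hir
    | succ k ih =>
      have hstep := step _ _ ih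
      convert hstep using 2
      · push_cast; ring
      · exact Fin.ext (by simp only [Fin.val_add, Fin.val_natCast, Fin.val_one]; omega)
  have hfin := iter (n / 2)
  have e1 : ((2 * (n/2) : ℕ) : ZMod n) = 0 := by
    have h2n : 2 * (n/2) = n := by omega
    rw [h2n, ZMod.natCast_self]
  have e2 : (((n/2 : ℕ)) : Fin 2) = 1 := by
    have hm : (n/2) % 2 = 1 := by omega
    apply Fin.ext
    rw [Fin.val_natCast, hm]
    rfl
  rw [e1, e2, add_zero] at hfin
  have e3 : ((i, r) : ZMod n × Fin 2) ∈ N n (i, r+1) := by simp [N, fin2_add_two]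
  have := huu _ _ _ hir hfin (self_mem_N _) e3
  exact hr1 r (congrArg Prod.snd this)

end B

section C

variable {n : ℕ}

def row (j : ℕ) : Fin 2 := if j % 2 = 0 then 0 else 1

def g (n : ℕ) (j : ℕ) : ZMod n × Fin 2 := (((2*j : ℕ) : ZMod n), row j)

def tval (n : ℕ) : ℕ := if n % 4 = 0 then n / 2 else n / 2 + 1

lemma one_ne_zero' (hn : 3 ≤ n) : (1 : ZMod n) ≠ 0 := by
  haveI : NeZero n := ⟨by omega⟩
  intro h
  have h' : ((1:ℕ) : ZMod n).val = ((0:ℕ) : ZMod n).val := by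
    rw [Nat.cast_one, Nat.cast_zero, h]
  rw [ZMod.val_cast_of_lt (by omega), ZMod.val_cast_of_lt (by omega)] at h'
  omega

lemma ne_add_one (hn : 3 ≤ n) (c : ZMod n) : c ≠ c + 1 := by
  intro h
  apply one_ne_zero' hn
  have h' : c + 1 = c + 0 := by rw [add_zero, ← h]
  exact add_left_cancel h'

lemma adj_vert (hn : 3 ≤ n) {i : ZMod n} {r s : Fin 2} (h : r ≠ s) :
    (prismGraph n).Adj (i, r) (i, s) := by
  refine ⟨?_, Or.inl ⟨rfl, h⟩⟩
  intro he
  rw [Prod.mk.injEq] at he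
  exact h he.2

lemma adj_right (hn : 3 ≤ n) {c i : ZMod n} {r : Fin 2} (h : c = i + 1) :
    (prismGraph n).Adj (c, r) (i, r) := by
  refine ⟨?_, Or.inr ⟨rfl, Or.inl h⟩⟩
  intro he
  rw [Prod.mk.injEq] at he
  rw [he.1] at h
  exact ne_add_one hn i h

lemma adj_left (hn : 3 ≤ n) {c i : ZMod n} {r : Fin 2} (h : i = c + 1) :
    (prismGraph n).Adj (c, r) (i, r) := by
  refine ⟨?_, Or.inr ⟨rfl, Or.inr h⟩⟩
  intro he
  rw [Prod.mk.injEq] at he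
  rw [← he.1] at h
  exact ne_add_one hn c h

lemma row_eq_zero {j : ℕ} (h : j % 2 = 0) : row j = 0 := by simp [row, h]
lemma row_eq_one {j : ℕ} (h : j % 2 = 1) : row j = 1 := by simp [row, h]

lemma fin2_resolve : ∀ x y z : Fin 2, x ≠ y → z ≠ y → x = z := by decide

lemma row_succ_ne (m : ℕ) : row (m + 1) ≠ row m := by
  unfold row
  rcases Nat.mod_two_eq_zero_or_one m with h | h <;>
    simp [h, Nat.add_mod]

lemma construction_dominates (hn : 3 ≤ n) :
    IsDominatingSet n ↑((Finset.range (tval n)).image (g n)) := by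
  haveI : NeZero n := ⟨by omega⟩
  have ht : (n % 4 = 0 ∧ tval n = n / 2) ∨ (n % 4 ≠ 0 ∧ tval n = n / 2 + 1) := by
    by_cases h : n % 4 = 0 <;> simp [tval, h]
  rintro ⟨i, r⟩
  suffices h : ∃ j < tval n, g n j = (i, r) ∨ (prismGraph n).Adj (g n j) (i, r) by
    obtain ⟨j, hj, hcase⟩ := h
    rcases hcase with heq | hadj
    · left
      rw [Finset.mem_coe]
      exact mem_image.mpr ⟨j, mem_range.mpr hj, heq⟩
    · right
      exact ⟨g n j, by rw [Finset.mem_coe]; exact mem_image.mpr ⟨j, mem_range.mpr hj, rfl⟩, hadj⟩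
  set a := i.val with ha_def
  have ha : a < n := ZMod.val_lt i
  have hi : ((a : ℕ) : ZMod n) = i := ZMod.natCast_rightInverse i
  rcases Nat.mod_two_eq_zero_or_one a with hpar | hpar
  · -- even column
    refine ⟨a / 2, by rcases ht with ⟨h40, hteq⟩ | ⟨h40, hteq⟩ <;> omega, ?_⟩
    have hcol : ((2 * (a / 2) : ℕ) : ZMod n) = i := by
      rw [show 2 * (a / 2) = a by omega, hi]
    by_cases hr : row (a / 2) = r
    · left
      rw [g, hcol, hr]
    · right
      rw [g, hcol]
      exact adj_vert hn hr
  · -- odd column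
    set p := a / 2 with hp_def
    by_cases hr : row p = r
    · -- use left neighbor, column a - 1 = 2p
      refine ⟨p, by rcases ht with ⟨h40, hteq⟩ | ⟨h40, hteq⟩ <;> omega, Or.inr ?_⟩
      have hcol : i = ((2 * p : ℕ) : ZMod n) + 1 := by
        rw [← hi, show a = 2 * p + 1 by omega]
        push_cast
        ring
      rw [g, hr]
      exact adj_left hn hcol
    · -- use right neighbor, column a + 1
      have hrow : row (p + 1) = r := fin2_resolve _ _ _ (row_succ_ne p) (Ne.symm hr)
      by_cases hlt : p + 1 < tval n
      · refine ⟨p + 1, hlt, Or.inr ?_⟩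
        have hcol : ((2 * (p + 1) : ℕ) : ZMod n) = i + 1 := by
          rw [← hi, show 2 * (p + 1) = a + 1 by omega]
          push_cast
          ring
        rw [g, hrow]
        exact adj_right hn hcol
      · -- wraparound: a = n - 1, n % 4 = 0
        have hwrap : a + 1 = n ∧ n % 4 = 0 ∧ p % 2 = 1 := by
          rcases ht with ⟨h40, hteq⟩ | ⟨h40, hteq⟩ <;> omega
        refine ⟨0, by rcases ht with ⟨h40, hteq⟩ | ⟨h40, hteq⟩ <;> omega, Or.inr ?_⟩
        have hr0 : r = 0 := by
          have := row_eq_one hwrap.2.2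
          rw [this] at hr
          exact (fin2_resolve _ _ _ (by decide : (0 : Fin 2) ≠ 1) (Ne.symm hr)).symm
        have hcol : ((2 * 0 : ℕ) : ZMod n) = i + 1 := by
          rw [← hi, show (2*0 : ℕ) = 0 from rfl]
          have : ((a : ℕ) : ZMod n) + 1 = ((a + 1 : ℕ) : ZMod n) := by push_cast; ring
          rw [this, hwrap.1, ZMod.natCast_self, Nat.cast_zero]
        rw [g, show row 0 = 0 from rfl, ← hr0] at *
        exact adj_right hn hcol

lemma card_construction (hn : 3 ≤ n) :
    ((Finset.range (tval n)).image (g n)).card ≤ tval n := by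
  refine le_trans Finset.card_image_le ?_
  simp

end C

lemma tval_mem {n : ℕ} (hn : 3 ≤ n) :
    tval n ∈ {k | ∃ S : Finset (ZMod n × Fin 2), S.card = k ∧ IsDominatingSet n ↑S} := by
  haveI : NeZero n := ⟨by omega⟩
  have hle : tval n ≤ Fintype.card (ZMod n × Fin 2) := by
    rw [Fintype.card_prod, ZMod.card, Fintype.card_fin]
    have : tval n ≤ n / 2 + 1 := by unfold tval; split <;> omega
    omega
  obtain ⟨T, hsub, hcard⟩ := Finset.exists_superset_card_eq (card_construction hn) hle
  refine ⟨T, hcard, ?_⟩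
  intro v
  rcases construction_dominates hn v with hv | ⟨u, hu, hadj⟩
  · rw [Finset.mem_coe] at hv ⊢
    exact Or.inl (hsub hv)
  · rw [Finset.mem_coe] at hu
    exact Or.inr ⟨u, by rw [Finset.mem_coe]; exact hsub hu, hadj⟩

end PrismProof

theorem prism_domination_number (n : ℕ) (hn : 3 ≤ n) :
    (n % 4 = 0 → domNum n = n / 2) ∧
    (n % 2 = 1 → domNum n = (n + 1) / 2) ∧
    (n % 4 = 2 → domNum n = n / 2 + 1) := by
  have hmemt := PrismProof.tval_mem hn
  have hub : domNum n ≤ PrismProof.tval n := Nat.sInf_le hmemt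
  have hmem : domNum n ∈ {k | ∃ S : Finset (ZMod n × Fin 2), S.card = k ∧ IsDominatingSet n ↑S} :=
    Nat.sInf_mem ⟨_, hmemt⟩
  obtain ⟨S, hcard, hdom⟩ := hmem
  have hlow := PrismProof.card_lower hn S hdom
  have ht : (n % 4 = 0 ∧ PrismProof.tval n = n / 2) ∨
      (n % 4 ≠ 0 ∧ PrismProof.tval n = n / 2 + 1) := by
    by_cases h : n % 4 = 0 <;> simp [PrismProof.tval, h]
  refine ⟨?_, ?_, ?_⟩
  · intro h0
    rcases ht with ⟨_, hteq⟩ | ⟨h40, _⟩ <;> omega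
  · intro h1
    rcases ht with ⟨h40, _⟩ | ⟨_, hteq⟩ <;> omega
  · intro h2
    have hne : S.card ≠ n / 2 := fun h => PrismProof.no_half hn h2 S hdom h
    rcases ht with ⟨h40, _⟩ | ⟨_, hteq⟩ <;> omega
end

section
/- Let n = 4k with k ≥ 1, and let w : ZMod n → Bool × Bool be a minimum dominating word for the prism graph G_n. Then every letter of w lies in {C, A, B}, the letter C occurs exactly 2k times, the letters A and B occur 2k times in total, and there exists s ∈ ZMod n such that the cyclic rotation of w by s equals the periodic word (B C A C)^k or the periodic word (A C B C)^k. -/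
/-- The periodic word with period-4 pattern `x0 x1 x2 x3`. -/
def pat4 (n : ℕ) (x0 x1 x2 x3 : Bool × Bool) (i : ZMod n) : Bool × Bool :=
  if i.val % 4 = 0 then x0 else if i.val % 4 = 1 then x1
  else if i.val % 4 = 2 then x2 else x3

open Finset


def nbhd (n : ℕ) (u : ZMod n × Fin 2) : Finset (ZMod n × Fin 2) :=
  {u, (u.1 + 1, u.2), (u.1 - 1, u.2), (u.1, u.2 + 1)}

lemma mem_nbhd {n : ℕ} {u v : ZMod n × Fin 2} :
    v ∈ nbhd n u ↔ v = u ∨ v = (u.1 + 1, u.2) ∨ v = (u.1 - 1, u.2) ∨ v = (u.1, u.2 + 1) := by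
  simp [nbhd]

lemma fin2_flip {a b : Fin 2} (h : a ≠ b) : b = a + 1 := by
  fin_cases a <;> fin_cases b <;> simp_all

lemma fin2_addtwo (a : Fin 2) : a + 1 + 1 = a := by fin_cases a <;> rfl

lemma card_nbhd_le {n : ℕ} (u : ZMod n × Fin 2) : (nbhd n u).card ≤ 4 := by
  unfold nbhd
  refine le_trans (card_insert_le _ _) ?_
  refine Nat.succ_le_succ (le_trans (card_insert_le _ _) ?_)
  refine Nat.succ_le_succ (le_trans (card_insert_le _ _) ?_)
  simp

lemma adj_mem_nbhd {n : ℕ} {u v : ZMod n × Fin 2} (h : (prismGraph n).Adj u v) :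
    v ∈ nbhd n u := by
  obtain ⟨hne, h⟩ := h
  rw [mem_nbhd]
  rcases h with ⟨h1, h2⟩ | ⟨h1, h2⟩
  · right; right; right
    have h3 : v.2 = u.2 + 1 := fin2_flip h2
    exact Prod.ext h1.symm h3
  · rcases h2 with h2 | h2
    · right; right; left
      refine Prod.ext ?_ h1.symm
      rw [h2]; ring
    · right; left; exact Prod.ext h2 h1.symm

lemma nbhd_symm_mp {n : ℕ} {u v : ZMod n × Fin 2} (h : v ∈ nbhd n u) : u ∈ nbhd n v := by
  rw [mem_nbhd] at h ⊢
  obtain ⟨i, r⟩ := u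
  rcases h with rfl | rfl | rfl | rfl
  · left; rfl
  · right; right; left; simp
  · right; left; simp
  · right; right; right; simp [fin2_addtwo]

lemma dom_cover {n : ℕ} {S : Finset (ZMod n × Fin 2)} (hS : IsDominatingSet n ↑S)
    (v : ZMod n × Fin 2) : ∃ u ∈ S, v ∈ nbhd n u := by
  rcases hS v with h | ⟨u, hu, hadj⟩
  · exact ⟨v, h, by rw [mem_nbhd]; left; rfl⟩
  · exact ⟨u, hu, adj_mem_nbhd hadj⟩

lemma dom_lower {n : ℕ} [NeZero n] {S : Finset (ZMod n × Fin 2)}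
    (hS : IsDominatingSet n ↑S) : 2 * n ≤ 4 * S.card := by
  have hcov : (univ : Finset (ZMod n × Fin 2)) ⊆ S.biUnion (nbhd n) := by
    intro v _
    rcases dom_cover hS v with ⟨u, hu, hv⟩
    exact mem_biUnion.2 ⟨u, hu, hv⟩
  have h1 : (univ : Finset (ZMod n × Fin 2)).card = 2 * n := by
    simp [card_univ, Nat.mul_comm]
  calc 2 * n = (univ : Finset (ZMod n × Fin 2)).card := h1.symm
    _ ≤ (S.biUnion (nbhd n)).card := card_le_card hcov
    _ ≤ ∑ u ∈ S, (nbhd n u).card := card_biUnion_le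
    _ ≤ ∑ _u ∈ S, 4 := sum_le_sum (fun u _ => card_nbhd_le u)
    _ = 4 * S.card := by rw [sum_const, smul_eq_mul, Nat.mul_comm]

lemma exact_dom {n : ℕ} [NeZero n] {S : Finset (ZMod n × Fin 2)}
    (hS : IsDominatingSet n ↑S) (hcard : 4 * S.card = 2 * n) (v : ZMod n × Fin 2) :
    (S.filter (fun u => v ∈ nbhd n u)).card = 1 := by
  classical
  set f : ZMod n × Fin 2 → ℕ := fun v => (S.filter (fun u => v ∈ nbhd n u)).card with hf
  have hdc : ∑ x : ZMod n × Fin 2, f x = ∑ u ∈ S, (nbhd n u).card := by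
    simp_rw [hf, Finset.card_filter]
    rw [Finset.sum_comm]
    congr 1
    ext u
    rw [← Finset.card_filter]
    simp [Finset.filter_univ_mem]
  have hone : ∀ x : ZMod n × Fin 2, 1 ≤ f x := by
    intro x
    obtain ⟨u, hu, hx⟩ := dom_cover hS x
    exact Finset.card_pos.2 ⟨u, Finset.mem_filter.2 ⟨hu, hx⟩⟩
  have htot : ∑ x : ZMod n × Fin 2, f x ≤ 2 * n := by
    rw [hdc]
    calc ∑ u ∈ S, (nbhd n u).card ≤ ∑ _u ∈ S, 4 := sum_le_sum (fun u _ => card_nbhd_le u)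
      _ = 4 * S.card := by rw [sum_const, smul_eq_mul, Nat.mul_comm]
      _ = 2 * n := hcard
  by_contra hv
  have hv2 : 1 < f v := lt_of_le_of_ne (hone v) (Ne.symm hv)
  have hlt : ∑ _x : ZMod n × Fin 2, 1 < ∑ x : ZMod n × Fin 2, f x :=
    Finset.sum_lt_sum (fun x _ => hone x) ⟨v, Finset.mem_univ v, hv2⟩
  have hcu : ∑ _x : ZMod n × Fin 2, 1 = 2 * n := by
    simp [Finset.card_univ, Nat.mul_comm]
  omega

lemma unique_dom {n : ℕ} [NeZero n] {S : Finset (ZMod n × Fin 2)}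
    (hS : IsDominatingSet n ↑S) (hcard : 4 * S.card = 2 * n) {v u1 u2 : ZMod n × Fin 2}
    (h1 : u1 ∈ S) (h1' : v ∈ nbhd n u1) (h2 : u2 ∈ S) (h2' : v ∈ nbhd n u2) : u1 = u2 := by
  have := exact_dom hS hcard v
  exact Finset.card_le_one.1 (le_of_eq this) u1 (Finset.mem_filter.2 ⟨h1, h1'⟩)
    u2 (Finset.mem_filter.2 ⟨h2, h2'⟩)

lemma step_lemma {n : ℕ} [NeZero n] {S : Finset (ZMod n × Fin 2)}
    (hS : IsDominatingSet n ↑S) (hcard : 4 * S.card = 2 * n)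
    (hone : (1 : ZMod n) ≠ 0) (htwo : (2 : ZMod n) ≠ 0)
    (i : ZMod n) (r : Fin 2) (h0 : (i, r) ∈ S) (h1 : (i, r + 1) ∉ S) :
    (i + 1, r) ∉ S ∧ (i + 1, r + 1) ∉ S ∧ (i + 2, r) ∉ S ∧ (i + 2, r + 1) ∈ S := by
  have hv0 : ((i + 1, r) : ZMod n × Fin 2) ∈ nbhd n (i, r) := by
    rw [mem_nbhd]; right; left; rfl
  have ha : (i + 1, r) ∉ S := by
    intro hIn
    have heq := unique_dom hS hcard hIn (mem_nbhd.2 (Or.inl rfl)) h0 hv0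
    have : (1 : ZMod n) = 0 := by
      have := congrArg Prod.fst heq
      simp only at this
      exact add_eq_left.mp this
    exact hone this
  have hb : (i + 1, r + 1) ∉ S := by
    intro hIn
    have hv : ((i + 1, r) : ZMod n × Fin 2) ∈ nbhd n (i + 1, r + 1) := by
      rw [mem_nbhd]; right; right; right
      exact Prod.ext rfl (fin2_addtwo r).symm
    have heq := unique_dom hS hcard hIn hv h0 hv0
    have := congrArg Prod.fst heq
    simp only at this
    exact hone (add_eq_left.mp this)
  have hc : (i + 2, r) ∉ S := by
    intro hIn
    have hv : ((i + 1, r) : ZMod n × Fin 2) ∈ nbhd n (i + 2, r) := by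
      rw [mem_nbhd]; right; right; left
      refine Prod.ext ?_ rfl
      show i + 1 = i + 2 - 1
      ring
    have heq := unique_dom hS hcard hIn hv h0 hv0
    have := congrArg Prod.fst heq
    simp only at this
    have h20 : (2 : ZMod n) = 0 := add_eq_left.mp this
    exact htwo h20
  refine ⟨ha, hb, hc, ?_⟩
  obtain ⟨u, hu, hvu⟩ := dom_cover hS (i + 1, r + 1)
  have := nbhd_symm_mp hvu
  rw [mem_nbhd] at this
  simp only at this
  rcases this with rfl | rfl | rfl | rfl
  · exact absurd hu hb
  · have : i + 1 + 1 = i + 2 := by ring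
    rwa [this] at hu
  · have : i + 1 - 1 = i := by ring
    rw [this] at hu
    exact absurd hu h1
  · rw [fin2_addtwo r] at hu
    exact absurd hu ha

noncomputable def WS (n : ℕ) (w : ZMod n → Bool × Bool) [NeZero n] : Finset (ZMod n × Fin 2) :=
  (Set.toFinite (wordSet n w)).toFinset

lemma coe_WS (n : ℕ) (w : ZMod n → Bool × Bool) [NeZero n] : ↑(WS n w) = wordSet n w :=
  Set.Finite.coe_toFinset _

lemma card_WS (n : ℕ) (w : ZMod n → Bool × Bool) [NeZero n] :
    (WS n w).card = (wordSet n w).ncard := (Set.ncard_eq_toFinset_card _ _).symm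

lemma mem_WS_top {n : ℕ} [NeZero n] {w : ZMod n → Bool × Bool} {i : ZMod n} :
    ((i, (0 : Fin 2)) ∈ WS n w) ↔ (w i).1 = true := by
  simp [WS, Set.Finite.mem_toFinset, wordSet]

lemma mem_WS_bot {n : ℕ} [NeZero n] {w : ZMod n → Bool × Bool} {i : ZMod n} :
    ((i, (1 : Fin 2)) ∈ WS n w) ↔ (w i).2 = true := by
  simp [WS, Set.Finite.mem_toFinset, wordSet]

section Chain
variable {n : ℕ} [NeZero n] {w : ZMod n → Bool × Bool}
  (hS : IsDominatingSet n (wordSet n w)) (hcard : 4 * (WS n w).card = 2 * n)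
  (hone : (1 : ZMod n) ≠ 0) (htwo : (2 : ZMod n) ≠ 0)

include hS hcard hone htwo

lemma hS' : IsDominatingSet n ↑(WS n w) := by rw [coe_WS]; exact hS

lemma chainA (i : ZMod n) (h : w i = letA) : w (i + 1) = letC ∧ w (i + 2) = letB := by
  have h0 : (i, (0 : Fin 2)) ∈ WS n w := mem_WS_top.2 (by rw [h]; rfl)
  have h1 : (i, (0 : Fin 2) + 1) ∉ WS n w := by
    show (i, (1 : Fin 2)) ∉ WS n w
    rw [mem_WS_bot, h]
    simp [letA]
  obtain ⟨ha, hb, hc, hd⟩ := step_lemma (hS' hS hcard hone htwo) hcard hone htwo i 0 h0 h1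
  constructor
  · have e1 : (w (i + 1)).1 = false := by
      have := (not_iff_not.2 (mem_WS_top (i := i + 1))).1 ha
      simpa using this
    have e2 : (w (i + 1)).2 = false := by
      have := (not_iff_not.2 (mem_WS_bot (i := i + 1))).1 hb
      simpa using this
    exact Prod.ext e1 e2
  · have e1 : (w (i + 2)).1 = false := by
      have := (not_iff_not.2 (mem_WS_top (i := i + 2))).1 hc
      simpa using this
    have e2 : (w (i + 2)).2 = true := mem_WS_bot.1 hd
    exact Prod.ext e1 e2

lemma chainB (i : ZMod n) (h : w i = letB) : w (i + 1) = letC ∧ w (i + 2) = letA := by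
  have h0 : (i, (1 : Fin 2)) ∈ WS n w := mem_WS_bot.2 (by rw [h]; rfl)
  have h1 : (i, (1 : Fin 2) + 1) ∉ WS n w := by
    show (i, (0 : Fin 2)) ∉ WS n w
    rw [mem_WS_top, h]
    simp [letB]
  obtain ⟨ha, hb, hc, hd⟩ := step_lemma (hS' hS hcard hone htwo) hcard hone htwo i 1 h0 h1
  constructor
  · have e1 : (w (i + 1)).1 = false := by
      have := (not_iff_not.2 (mem_WS_top (i := i + 1))).1 hb
      simpa using this
    have e2 : (w (i + 1)).2 = false := by
      have := (not_iff_not.2 (mem_WS_bot (i := i + 1))).1 ha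
      simpa using this
    exact Prod.ext e1 e2
  · have e1 : (w (i + 2)).1 = true := mem_WS_top.1 hd
    have e2 : (w (i + 2)).2 = false := by
      have := (not_iff_not.2 (mem_WS_bot (i := i + 2))).1 hc
      simpa using this
    exact Prod.ext e1 e2

lemma chain4A (i : ZMod n) (h : w i = letA) :
    w (i + 1) = letC ∧ w (i + 2) = letB ∧ w (i + 3) = letC ∧ w (i + 4) = letA := by
  obtain ⟨h1, h2⟩ := chainA hS hcard hone htwo i h
  obtain ⟨h3, h4⟩ := chainB hS hcard hone htwo (i + 2) h2
  refine ⟨h1, h2, ?_, ?_⟩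
  · have e : i + 2 + 1 = i + 3 := by ring
    rwa [e] at h3
  · have e : i + 2 + 2 = i + 4 := by ring
    rwa [e] at h4

lemma chain4B (i : ZMod n) (h : w i = letB) :
    w (i + 1) = letC ∧ w (i + 2) = letA ∧ w (i + 3) = letC ∧ w (i + 4) = letB := by
  obtain ⟨h1, h2⟩ := chainB hS hcard hone htwo i h
  obtain ⟨h3, h4⟩ := chainA hS hcard hone htwo (i + 2) h2
  refine ⟨h1, h2, ?_, ?_⟩
  · have e : i + 2 + 1 = i + 3 := by ring
    rwa [e] at h3
  · have e : i + 2 + 2 = i + 4 := by ring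
    rwa [e] at h4

lemma noD (i : ZMod n) : w i ≠ letD := by
  intro h
  have h0 : (i, (0 : Fin 2)) ∈ WS n w := mem_WS_top.2 (by rw [h]; rfl)
  have h1 : (i, (1 : Fin 2)) ∈ WS n w := mem_WS_bot.2 (by rw [h]; rfl)
  have hv : ((i, (0 : Fin 2)) : ZMod n × Fin 2) ∈ nbhd n (i, (1 : Fin 2)) := by
    rw [mem_nbhd]; right; right; right; rfl
  have := unique_dom (hS' hS hcard hone htwo) hcard h0 (mem_nbhd.2 (Or.inl rfl)) h1 hv
  have := congrArg Prod.snd this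
  simp at this

lemma exists_nonC : ∃ i, w i = letA ∨ w i = letB := by
  obtain ⟨u, hu, -⟩ := dom_cover (hS' hS hcard hone htwo) (0, 0)
  refine ⟨u.1, ?_⟩
  have hD := noD hS hcard hone htwo u.1
  obtain ⟨i, r⟩ := u
  fin_cases r
  · have := mem_WS_top.1 hu
    rcases hB : (w i).2 with _ | _
    · left; exact Prod.ext this hB
    · exact absurd (Prod.ext this hB) hD
  · have := mem_WS_bot.1 hu
    rcases hA : (w i).1 with _ | _
    · right; exact Prod.ext hA this
    · exact absurd (Prod.ext hA this) hD

end Chain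


lemma count_res (k r : ℕ) [NeZero (4 * k)] (hk : 0 < k) (hr : r < 4) :
    (Finset.univ.filter (fun i : ZMod (4 * k) => i.val % 4 = r)).card = k := by
  have h : (Finset.univ.filter (fun i : ZMod (4 * k) => i.val % 4 = r)).card
      = (Finset.range k).card := by
    refine Finset.card_nbij' (fun i => i.val / 4)
      (fun j => ((4 * j + r : ℕ) : ZMod (4 * k))) ?_ ?_ ?_ ?_
    · intro a ha
      rw [Finset.mem_coe, Finset.mem_filter] at ha
      have hlt : a.val < 4 * k := ZMod.val_lt a
      show a.val / 4 ∈ Finset.range k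
      rw [Finset.mem_range]
      omega
    · intro j hj
      rw [Finset.mem_coe, Finset.mem_range] at hj
      have hlt : 4 * j + r < 4 * k := by omega
      show _ ∈ Finset.filter _ _
      rw [Finset.mem_filter]
      refine ⟨Finset.mem_univ _, ?_⟩
      rw [ZMod.val_cast_of_lt hlt]
      omega
    · intro a ha
      rw [Finset.mem_coe, Finset.mem_filter] at ha
      have h4 : 4 * (a.val / 4) + r = a.val := by
        have := Nat.div_add_mod a.val 4
        omega
      show ((4 * (a.val / 4) + r : ℕ) : ZMod (4 * k)) = a
      rw [h4]
      simp [ZMod.natCast_val, ZMod.cast_id]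
    · intro j hj
      rw [Finset.mem_coe, Finset.mem_range] at hj
      have hlt : 4 * j + r < 4 * k := by omega
      show ((4 * j + r : ℕ) : ZMod (4 * k)).val / 4 = j
      rw [ZMod.val_cast_of_lt hlt]
      omega
  rw [h, Finset.card_range]

lemma card_wordSet_nonC (n : ℕ) [NeZero n] (w : ZMod n → Bool × Bool)
    (hw : ∀ i, w i = letC ∨ w i = letA ∨ w i = letB) :
    (WS n w).card = (Finset.univ.filter (fun i => w i ≠ letC)).card := by
  refine Finset.card_nbij' (fun v => v.1)
    (fun i => (i, if (w i).1 then (0 : Fin 2) else 1)) ?_ ?_ ?_ ?_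
  · rintro ⟨i, r⟩ hv
    rw [Finset.mem_coe, Finset.mem_filter]
    refine ⟨Finset.mem_univ _, ?_⟩
    intro hC
    fin_cases r
    · have := mem_WS_top.1 hv
      rw [hC] at this
      simp [letC] at this
    · have := mem_WS_bot.1 hv
      rw [hC] at this
      simp [letC] at this
  · intro i hi
    rw [Finset.mem_coe, Finset.mem_filter] at hi
    rcases hw i with h | h | h
    · exact absurd h hi.2
    · simp only [h]
      show ((i, (if (true : Bool) then (0:Fin 2) else 1)) : ZMod n × Fin 2) ∈ WS n w
      simp only [if_true]
      exact mem_WS_top.2 (by rw [h]; rfl)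
    · simp only [h]
      show ((i, (if (false : Bool) then (0:Fin 2) else 1)) : ZMod n × Fin 2) ∈ WS n w
      simp only [Bool.false_eq_true, if_false]
      exact mem_WS_bot.2 (by rw [h]; rfl)
  · rintro ⟨i, r⟩ hv
    simp only
    fin_cases r
    · have := mem_WS_top.1 hv
      rw [this]
      rfl
    · have h2 := mem_WS_bot.1 hv
      rcases hw i with h | h | h
      · rw [h] at h2; simp [letC] at h2
      · rw [h] at h2; simp [letA] at h2
      · rw [h]
        rfl
  · intro i hi
    rfl

lemma nz_cast {k : ℕ} (hk : 0 < k) (c : ℕ) (hc0 : 0 < c) (hck : c < 4 * k) :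
    ((c : ℕ) : ZMod (4 * k)) ≠ 0 := by
  haveI : NeZero (4 * k) := ⟨by omega⟩
  intro h
  have hdvd := (ZMod.natCast_eq_zero_iff c (4 * k)).1 h
  have := Nat.le_of_dvd hc0 hdvd
  omega

lemma val_add_mod4 {k : ℕ} [NeZero (4 * k)] (i : ZMod (4 * k)) (c : ℕ) :
    ((i + (c : ZMod (4 * k))).val) % 4 = (i.val + c) % 4 := by
  have hdvd : (4 : ℕ) ∣ 4 * k := ⟨k, rfl⟩
  rw [ZMod.val_add, ZMod.val_natCast, Nat.mod_mod_of_dvd _ hdvd]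
  conv_rhs => rw [Nat.add_mod]
  rw [Nat.add_mod i.val (c % (4 * k)), Nat.mod_mod_of_dvd c hdvd]

def patACBC (n : ℕ) : ZMod n → Bool × Bool := pat4 n letA letC letB letC

lemma patACBC_letters (n : ℕ) (i : ZMod n) :
    patACBC n i = letC ∨ patACBC n i = letA ∨ patACBC n i = letB := by
  unfold patACBC pat4
  split_ifs <;> simp

lemma patACBC_nonC_iff (n : ℕ) (i : ZMod n) :
    patACBC n i ≠ letC ↔ (i.val % 4 = 0 ∨ i.val % 4 = 2) := by
  have h4 : i.val % 4 < 4 := Nat.mod_lt _ (by norm_num)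
  unfold patACBC pat4
  split_ifs with h0 h1 h2 <;> simp [letA, letB, letC] <;> omega

lemma patACBC_dom {k : ℕ} (hk : 0 < k) [NeZero (4 * k)] :
    IsDominatingSet (4 * k) (wordSet (4 * k) (patACBC (4 * k))) := by
  set n := 4 * k with hn
  have hmem : ∀ (j : ZMod n) (r : Fin 2), ((j, r) ∈ wordSet n (patACBC n)) ↔
      (if r = 0 then (patACBC n j).1 else (patACBC n j).2) = true := fun _ _ => Iff.rfl
  set m1 : ZMod n := ((4 * k - 1 : ℕ) : ZMod n) with hm1
  have hm1add : ∀ i : ZMod n, i + m1 + 1 = i := by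
    intro i
    have : m1 + 1 = 0 := by
      rw [hm1, ← Nat.cast_add_one, show 4 * k - 1 + 1 = 4 * k by omega, ZMod.natCast_self]
    rw [add_assoc, this, add_zero]
  have hm1ne : ∀ i : ZMod n, i + m1 ≠ i := by
    intro i h
    exact nz_cast hk (4 * k - 1) (by omega) (by omega) (add_eq_left.mp h)
  have h1ne : ∀ i : ZMod n, i + 1 ≠ i := by
    intro i h
    have := add_eq_left.mp h
    exact nz_cast hk 1 one_pos (by omega) (by rw [Nat.cast_one]; exact this)
  have hval1 : ∀ i : ZMod n, (i + 1).val % 4 = (i.val + 1) % 4 := by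
    intro i
    have := val_add_mod4 (k := k) i 1
    rwa [Nat.cast_one] at this
  have hvalm1 : ∀ i : ZMod n, (i + m1).val % 4 = (i.val + (4 * k - 1)) % 4 := fun i =>
    val_add_mod4 (k := k) i (4 * k - 1)
  rintro ⟨i, r⟩
  have h4 : i.val % 4 < 4 := Nat.mod_lt _ (by norm_num)
  have hres : i.val % 4 = 0 ∨ i.val % 4 = 1 ∨ i.val % 4 = 2 ∨ i.val % 4 = 3 := by omega
  fin_cases r
  · rcases hres with h | h | h | h
    · left
      show (if (0 : Fin 2) = 0 then (patACBC n i).1 else (patACBC n i).2) = true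
      simp [patACBC, pat4, h, letA]
    · right
      refine ⟨(i + m1, 0), ?_, ?_⟩
      · have hv : (i + m1).val % 4 = 0 := by rw [hvalm1]; omega
        show (if (0 : Fin 2) = 0 then (patACBC n (i + m1)).1 else _) = true
        simp [patACBC, pat4, hv, letA]
      · exact ⟨by simp [hm1ne i], Or.inr ⟨rfl, Or.inr (hm1add i).symm⟩⟩
    · right
      refine ⟨(i, 1), ?_, ?_⟩
      · show (if (1 : Fin 2) = 0 then _ else (patACBC n i).2) = true
        simp [patACBC, pat4, h, letB]
      · exact ⟨by simp, Or.inl ⟨rfl, by simp⟩⟩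
    · right
      refine ⟨(i + 1, 0), ?_, ?_⟩
      · have hv : (i + 1).val % 4 = 0 := by rw [hval1]; omega
        show (if (0 : Fin 2) = 0 then (patACBC n (i + 1)).1 else _) = true
        simp [patACBC, pat4, hv, letA]
      · exact ⟨by simp [h1ne i], Or.inr ⟨rfl, Or.inl rfl⟩⟩
  · rcases hres with h | h | h | h
    · right
      refine ⟨(i, 0), ?_, ?_⟩
      · show (if (0 : Fin 2) = 0 then (patACBC n i).1 else _) = true
        simp [patACBC, pat4, h, letA]
      · exact ⟨by simp, Or.inl ⟨rfl, by simp⟩⟩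
    · right
      refine ⟨(i + 1, 1), ?_, ?_⟩
      · have hv : (i + 1).val % 4 = 2 := by rw [hval1]; omega
        show (if (1 : Fin 2) = 0 then _ else (patACBC n (i + 1)).2) = true
        simp [patACBC, pat4, hv, letB]
      · exact ⟨by simp [h1ne i], Or.inr ⟨rfl, Or.inl rfl⟩⟩
    · left
      show (if (1 : Fin 2) = 0 then _ else (patACBC n i).2) = true
      simp [patACBC, pat4, h, letB]
    · right
      refine ⟨(i + m1, 1), ?_, ?_⟩
      · have hv : (i + m1).val % 4 = 2 := by rw [hvalm1]; omega
        show (if (1 : Fin 2) = 0 then _ else (patACBC n (i + m1)).2) = true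
        simp [patACBC, pat4, hv, letB]
      · exact ⟨by simp [hm1ne i], Or.inr ⟨rfl, Or.inr (hm1add i).symm⟩⟩

lemma card_res_or {k : ℕ} (hk : 0 < k) [NeZero (4 * k)] (r1 r2 : ℕ) (h1 : r1 < 4)
    (h2 : r2 < 4) (hne : r1 ≠ r2) :
    (Finset.univ.filter (fun i : ZMod (4 * k) => i.val % 4 = r1 ∨ i.val % 4 = r2)).card
      = 2 * k := by
  rw [Finset.filter_or, Finset.card_union_of_disjoint]
  · rw [count_res k r1 hk h1, count_res k r2 hk h2]
    ring
  · rw [Finset.disjoint_filter]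
    intro x _ hx1 hx2
    omega

lemma card_WS_patACBC {k : ℕ} (hk : 0 < k) [NeZero (4 * k)] :
    (WS (4 * k) (patACBC (4 * k))).card = 2 * k := by
  rw [card_wordSet_nonC _ _ (patACBC_letters (4 * k))]
  have : Finset.univ.filter (fun i : ZMod (4 * k) => patACBC (4 * k) i ≠ letC)
      = Finset.univ.filter (fun i : ZMod (4 * k) => i.val % 4 = 0 ∨ i.val % 4 = 2) := by
    apply Finset.filter_congr
    intro x _
    simp only [patACBC_nonC_iff]
  rw [this]
  exact card_res_or hk 0 2 (by norm_num) (by norm_num) (by norm_num)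

lemma domNum_eq {k : ℕ} (hk : 0 < k) [NeZero (4 * k)] : domNum (4 * k) = 2 * k := by
  have hmem : 2 * k ∈ {m | ∃ S : Finset (ZMod (4 * k) × Fin 2), S.card = m ∧
      IsDominatingSet (4 * k) ↑S} :=
    ⟨WS (4 * k) (patACBC (4 * k)), card_WS_patACBC hk, by rw [coe_WS]; exact patACBC_dom hk⟩
  refine le_antisymm (Nat.sInf_le hmem) ?_
  refine le_csInf ⟨2 * k, hmem⟩ ?_
  rintro m ⟨S, rfl, hS⟩
  have := dom_lower hS
  omega


lemma pattern_prop {n : ℕ} [NeZero n] {w : ZMod n → Bool × Bool} {x y : Bool × Bool}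
    (hchain : ∀ i, w i = x →
      w (i + 1) = letC ∧ w (i + 2) = y ∧ w (i + 3) = letC ∧ w (i + 4) = x)
    (i0 : ZMod n) (h0 : w i0 = x) :
    ∀ i, w (i + i0) = pat4 n x letC y letC i := by
  have hA4 : ∀ m : ℕ, w (i0 + ((4 * m : ℕ) : ZMod n)) = x := by
    intro m
    induction m with
    | zero => simpa using h0
    | succ m ih =>
      have h := (hchain _ ih).2.2.2
      have e : i0 + ((4 * (m + 1) : ℕ) : ZMod n) = i0 + ((4 * m : ℕ) : ZMod n) + 4 := by
        push_cast; ring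
      rw [e]; exact h
  intro i
  have hm : 4 * (i.val / 4) + i.val % 4 = i.val := Nat.div_add_mod _ 4
  have hcast : ((i.val : ℕ) : ZMod n) = i := by simp [ZMod.natCast_val, ZMod.cast_id]
  have h2 : ((4 * (i.val / 4) : ℕ) : ZMod n) + ((i.val % 4 : ℕ) : ZMod n) = i := by
    rw [← Nat.cast_add, hm, hcast]
  have hsplit : i + i0 = (i0 + ((4 * (i.val / 4) : ℕ) : ZMod n)) + ((i.val % 4 : ℕ) : ZMod n) := by
    conv_lhs => rw [← h2]
    ring
  have hq := hA4 (i.val / 4)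
  obtain ⟨hc1, hc2, hc3, hc4⟩ := hchain _ hq
  have hr4 : i.val % 4 < 4 := Nat.mod_lt _ (by norm_num)
  rcases (by omega : i.val % 4 = 0 ∨ i.val % 4 = 1 ∨ i.val % 4 = 2 ∨ i.val % 4 = 3) with
    hr | hr | hr | hr <;> rw [hsplit, hr] <;>
    [skip; skip; skip; skip]
  · rw [show ((0 : ℕ) : ZMod n) = 0 from Nat.cast_zero, add_zero,
      show pat4 n x letC y letC i = x from by simp [pat4, hr]]
    exact hq
  · rw [show ((1 : ℕ) : ZMod n) = 1 from Nat.cast_one,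
      show pat4 n x letC y letC i = letC from by simp [pat4, hr]]
    exact hc1
  · rw [show ((2 : ℕ) : ZMod n) = 2 from by norm_cast,
      show pat4 n x letC y letC i = y from by simp [pat4, hr]]
    exact hc2
  · rw [show ((3 : ℕ) : ZMod n) = 3 from by norm_cast,
      show pat4 n x letC y letC i = letC from by simp [pat4, hr]]
    exact hc3

theorem classification_mod_zero (k : ℕ) (hk : 1 ≤ k)
    (w : ZMod (4 * k) → Bool × Bool) (hw : IsMinDomWord (4 * k) w) :
    (∀ i, w i = letC ∨ w i = letA ∨ w i = letB) ∧
    {i : ZMod (4 * k) | w i = letC}.ncard = 2 * k ∧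
    {i : ZMod (4 * k) | w i = letA ∨ w i = letB}.ncard = 2 * k ∧
    ∃ s : ZMod (4 * k),
      (∀ i, w (i + s) = pat4 (4 * k) letB letC letA letC i) ∨
      (∀ i, w (i + s) = pat4 (4 * k) letA letC letB letC i) := by
  haveI : NeZero (4 * k) := ⟨by omega⟩
  obtain ⟨hdom, hncard⟩ := hw
  have hkpos : 0 < k := hk
  have hdnum : domNum (4 * k) = 2 * k := domNum_eq hkpos
  have hScard : (WS (4 * k) w).card = 2 * k := by rw [card_WS, hncard, hdnum]
  have hcard4 : 4 * (WS (4 * k) w).card = 2 * (4 * k) := by rw [hScard]; ring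
  have hone : (1 : ZMod (4 * k)) ≠ 0 := by
    have := nz_cast hkpos 1 one_pos (by omega)
    rwa [Nat.cast_one] at this
  have htwo : (2 : ZMod (4 * k)) ≠ 0 := by
    have := nz_cast hkpos 2 (by norm_num) (by omega)
    rwa [Nat.cast_ofNat] at this
  obtain ⟨i0, hi0⟩ := exists_nonC hdom hcard4 hone htwo
  have hpat : (∀ i, w (i + i0) = pat4 (4 * k) letB letC letA letC i) ∨
      (∀ i, w (i + i0) = pat4 (4 * k) letA letC letB letC i) := by
    rcases hi0 with h | h
    · exact Or.inr (pattern_prop (fun i hi => chain4A hdom hcard4 hone htwo i hi) i0 h)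
    · exact Or.inl (pattern_prop (fun i hi => chain4B hdom hcard4 hone htwo i hi) i0 h)
  have hlet : ∀ j, w j = letC ∨ w j = letA ∨ w j = letB := by
    intro j
    have hsub : j - i0 + i0 = j := sub_add_cancel j i0
    rcases hpat with h | h <;>
      { have := h (j - i0)
        rw [hsub] at this
        rw [this]
        unfold pat4
        split_ifs <;> simp [letA, letB, letC] }
  have hABset : {i : ZMod (4 * k) | w i = letA ∨ w i = letB}
      = ↑(Finset.univ.filter (fun i => w i ≠ letC)) := by
    ext j
    simp only [Set.mem_setOf_eq, Finset.coe_filter, Finset.mem_univ, true_and,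
      Set.mem_setOf_eq]
    constructor
    · rintro (h | h) hC <;> rw [h] at hC <;> simp [letA, letB, letC] at hC
    · intro h
      rcases hlet j with hh | hh | hh
      · exact absurd hh h
      · exact Or.inl hh
      · exact Or.inr hh
  have hABcard : (Finset.univ.filter (fun i => w i ≠ letC)).card = 2 * k := by
    rw [← card_wordSet_nonC (4 * k) w hlet, hScard]
  have hAB : {i : ZMod (4 * k) | w i = letA ∨ w i = letB}.ncard = 2 * k := by
    rw [hABset, Set.ncard_coe_finset, hABcard]
  have hCset : {i : ZMod (4 * k) | w i = letC}
      = ↑(Finset.univ.filter (fun i => w i = letC)) := by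
    ext j
    simp
  have hCcard : (Finset.univ.filter (fun i : ZMod (4 * k) => w i = letC)).card = 2 * k := by
    have hsplit := Finset.card_filter_add_card_filter_not
      (s := (Finset.univ : Finset (ZMod (4 * k)))) (p := fun i => w i = letC)
    have huniv : (Finset.univ : Finset (ZMod (4 * k))).card = 4 * k := by
      simp [Finset.card_univ]
    have : (Finset.univ.filter (fun i : ZMod (4 * k) => ¬ w i = letC)).card = 2 * k := hABcard
    omega
  refine ⟨hlet, ?_, hAB, ⟨i0, hpat⟩⟩
  rw [hCset, Set.ncard_coe_finset, hCcard]
end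

section
/- If n ≥ 5 is odd, then the dominion of the prism graph satisfies ζ(G_n) = 2n. -/
namespace PrismAux

/-- indicator of membership -/
def ind {n : ℕ} (S : Finset (ZMod n × Fin 2)) (i : ZMod n) (s : Fin 2) : ℕ :=
  if (i, s) ∈ S then 1 else 0

lemma ind_le_one {n : ℕ} (S : Finset (ZMod n × Fin 2)) (i : ZMod n) (s : Fin 2) :
    ind S i s ≤ 1 := by unfold ind; split <;> omega

lemma ind_eq_one_iff {n : ℕ} (S : Finset (ZMod n × Fin 2)) (i : ZMod n) (s : Fin 2) :
    ind S i s = 1 ↔ (i, s) ∈ S := by unfold ind; split <;> simp_all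

/-- coverage count of vertex (i,s) -/
def cov {n : ℕ} (S : Finset (ZMod n × Fin 2)) (i : ZMod n) (s : Fin 2) : ℕ :=
  ind S (i-1) s + ind S i s + ind S (i+1) s + ind S i (s+1)

def g {n : ℕ} (S : Finset (ZMod n × Fin 2)) (i : ZMod n) : ℕ :=
  cov S i 0 + cov S i 1

def t {n : ℕ} (S : Finset (ZMod n × Fin 2)) (i : ZMod n) : ℕ :=
  ind S i 0 + ind S i 1

lemma g_eq {n : ℕ} (S : Finset (ZMod n × Fin 2)) (i : ZMod n) :
    g S i = t S (i-1) + 2 * t S i + t S (i+1) := by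
  show cov S i 0 + cov S i 1 = _
  unfold cov t
  have h0 : (0:Fin 2) + 1 = 1 := rfl
  have h1 : (1:Fin 2) + 1 = 0 := rfl
  rw [h0, h1]; ring

lemma cast_inj {n : ℕ} [NeZero n] {a b : ℕ} (ha : a < n) (hb : b < n)
    (h : (a : ZMod n) = b) : a = b := by
  have := congrArg ZMod.val h
  rwa [ZMod.val_cast_of_lt ha, ZMod.val_cast_of_lt hb] at this

lemma cast_ne_zero {n : ℕ} [NeZero n] {a : ℕ} (h0 : 0 < a) (ha : a < n) :
    (a : ZMod n) ≠ 0 := by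
  intro h
  have := cast_inj ha (Nat.pos_of_ne_zero (NeZero.ne n)) (by simpa using h)
  omega

lemma card_eq_sum {n : ℕ} [NeZero n] (S : Finset (ZMod n × Fin 2)) :
    S.card = ∑ i : ZMod n, t S i := by
  have : S.card = ∑ v : ZMod n × Fin 2, if v ∈ S then 1 else 0 := by
    rw [Finset.sum_ite_mem, Finset.univ_inter, Finset.sum_const, smul_eq_mul, mul_one]
  rw [this, Fintype.sum_prod_type]
  refine Finset.sum_congr rfl fun i _ => ?_
  rw [Fin.sum_univ_two]; rfl

lemma sum_shift {n : ℕ} [NeZero n] (f : ZMod n → ℕ) :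
    ∑ i : ZMod n, f (i + 1) = ∑ i, f i :=
  Fintype.sum_equiv (Equiv.addRight 1) _ _ (fun _ => rfl)

lemma sum_shift' {n : ℕ} [NeZero n] (f : ZMod n → ℕ) :
    ∑ i : ZMod n, f (i - 1) = ∑ i, f i :=
  Fintype.sum_equiv (Equiv.subRight 1) _ _ (fun _ => rfl)

lemma sum_g {n : ℕ} [NeZero n] (S : Finset (ZMod n × Fin 2)) :
    ∑ i : ZMod n, g S i = 4 * S.card := by
  have h : ∀ i : ZMod n, g S i = t S (i-1) + 2 * t S i + t S (i+1) := g_eq S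
  calc ∑ i : ZMod n, g S i
      = ∑ i : ZMod n, (t S (i-1) + 2 * t S i + t S (i+1)) := Finset.sum_congr rfl fun i _ => h i
    _ = (∑ i : ZMod n, t S (i-1)) + (∑ i : ZMod n, 2 * t S i) + ∑ i : ZMod n, t S (i+1) := by
        rw [Finset.sum_add_distrib, Finset.sum_add_distrib]
    _ = 4 * S.card := by
        rw [sum_shift (t S), sum_shift' (t S), ← Finset.mul_sum, ← card_eq_sum]
        ring

/-- domination gives coverage ≥ 1 -/
lemma cov_pos {n : ℕ} {S : Finset (ZMod n × Fin 2)} (h : IsDominatingSet n ↑S)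
    (i : ZMod n) (s : Fin 2) : 1 ≤ cov S i s := by
  rcases h (i, s) with hv | ⟨⟨j, r⟩, hu, hne, hadj⟩
  · have : ind S i s = 1 := (ind_eq_one_iff S i s).2 hv
    unfold cov; omega
  · rcases hadj with ⟨h1, h2⟩ | ⟨h1, h2⟩
    · -- same column, diff row : j = i, r ≠ s so r = s + 1
      simp only at h1 h2
      have hr : r = s + 1 := by fin_omega
      have : ind S i (s+1) = 1 := (ind_eq_one_iff _ _ _).2 (by rwa [← h1, ← hr])
      unfold cov; omega
    · simp only at h1 h2
      rcases h2 with h2 | h2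
      · -- j = i + 1
        have : ind S (i+1) s = 1 := (ind_eq_one_iff _ _ _).2 (by rw [← h2, ← h1]; exact hu)
        unfold cov; omega
      · -- i = j + 1, so j = i - 1
        have hj : j = i - 1 := by rw [h2]; ring
        have : ind S (i-1) s = 1 := (ind_eq_one_iff _ _ _).2 (by rw [← hj, ← h1]; exact hu)
        unfold cov; omega

lemma g_ge_two {n : ℕ} {S : Finset (ZMod n × Fin 2)} (h : IsDominatingSet n ↑S)
    (i : ZMod n) : 2 ≤ g S i := by
  have := cov_pos h i 0
  have := cov_pos h i 1
  unfold g; omega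




-- generic sum bounds
lemma bound1 {n : ℕ} [NeZero n] (f : ZMod n → ℕ) (h2 : ∀ i, 2 ≤ f i)
    (hs : ∑ i, f i = 2 * n + 2) (i : ZMod n) : f i ≤ 4 := by
  have hcard : Fintype.card (ZMod n) = n := ZMod.card n
  have h := Finset.add_sum_erase Finset.univ f (Finset.mem_univ i)
  have hlb : (Finset.univ.erase i).card * 2 ≤ ∑ j ∈ Finset.univ.erase i, f j := by
    calc (Finset.univ.erase i).card * 2 = ∑ _j ∈ Finset.univ.erase i, 2 := by
          rw [Finset.sum_const, smul_eq_mul]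
      _ ≤ _ := Finset.sum_le_sum fun j _ => h2 j
  rw [Finset.card_erase_of_mem (Finset.mem_univ i), Finset.card_univ, hcard] at hlb
  have hn1 : 1 ≤ n := Nat.pos_of_ne_zero (NeZero.ne n)
  omega

lemma bound2 {n : ℕ} [NeZero n] (f : ZMod n → ℕ) (h2 : ∀ i, 2 ≤ f i)
    (hs : ∑ i, f i = 2 * n + 2) {i j : ZMod n} (hij : i ≠ j) : f i + f j ≤ 6 := by
  have hcard : Fintype.card (ZMod n) = n := ZMod.card n
  have hmem : j ∈ Finset.univ.erase i := Finset.mem_erase.2 ⟨Ne.symm hij, Finset.mem_univ j⟩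
  have h := Finset.add_sum_erase Finset.univ f (Finset.mem_univ i)
  have h' := Finset.add_sum_erase (Finset.univ.erase i) f hmem
  set s2 := (Finset.univ.erase i).erase j
  have hlb : s2.card * 2 ≤ ∑ k ∈ s2, f k := by
    calc s2.card * 2 = ∑ _k ∈ s2, 2 := by rw [Finset.sum_const, smul_eq_mul]
      _ ≤ _ := Finset.sum_le_sum fun k _ => h2 k
  have hc2 : s2.card = n - 2 := by
    rw [Finset.card_erase_of_mem hmem, Finset.card_erase_of_mem (Finset.mem_univ i),
      Finset.card_univ, hcard]; omega
  rw [hc2] at hlb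
  have hn2 : 2 ≤ n := by
    by_contra hlt
    interval_cases n
    · exact absurd rfl (NeZero.ne 0)
    · exact hij (Subsingleton.elim i j)
  omega

lemma bound3 {n : ℕ} [NeZero n] (f : ZMod n → ℕ) (h2 : ∀ i, 2 ≤ f i)
    (hs : ∑ i, f i = 2 * n + 2) {i j : ZMod n} (hij : i ≠ j) (h6 : f i + f j = 6)
    {k : ZMod n} (hki : k ≠ i) (hkj : k ≠ j) : f k = 2 := by
  have hcard : Fintype.card (ZMod n) = n := ZMod.card n
  have hmemj : j ∈ Finset.univ.erase i := Finset.mem_erase.2 ⟨Ne.symm hij, Finset.mem_univ j⟩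
  have hmemk : k ∈ (Finset.univ.erase i).erase j :=
    Finset.mem_erase.2 ⟨hkj, Finset.mem_erase.2 ⟨hki, Finset.mem_univ k⟩⟩
  have h := Finset.add_sum_erase Finset.univ f (Finset.mem_univ i)
  have h' := Finset.add_sum_erase (Finset.univ.erase i) f hmemj
  have h'' := Finset.add_sum_erase ((Finset.univ.erase i).erase j) f hmemk
  set s3 := (((Finset.univ.erase i).erase j).erase k)
  have hlb : s3.card * 2 ≤ ∑ x ∈ s3, f x := by
    calc s3.card * 2 = ∑ _x ∈ s3, 2 := by rw [Finset.sum_const, smul_eq_mul]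
      _ ≤ _ := Finset.sum_le_sum fun x _ => h2 x
  have hc3 : s3.card = n - 3 := by
    rw [Finset.card_erase_of_mem hmemk, Finset.card_erase_of_mem hmemj,
      Finset.card_erase_of_mem (Finset.mem_univ i), Finset.card_univ, hcard]; omega
  rw [hc3] at hlb
  have hn3 : 3 ≤ n := by
    have : ({i, j, k} : Finset (ZMod n)).card = 3 := by
      rw [Finset.card_insert_of_notMem (by simp [hij, Ne.symm hki]),
        Finset.card_insert_of_notMem (by simp [Ne.symm hkj]), Finset.card_singleton]
    calc 3 = ({i, j, k} : Finset (ZMod n)).card := this.symm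
      _ ≤ Fintype.card (ZMod n) := Finset.card_le_univ _
      _ = n := hcard
  have := h2 k
  omega





def patt (n : ℕ) (p : ZMod n) (r : Fin 2) : Finset (ZMod n × Fin 2) :=
  (Finset.range ((n+1)/2)).image fun j => (p + ((2*j : ℕ) : ZMod n), if j % 2 = 0 then r else r + 1)

lemma mem_patt {n : ℕ} (p : ZMod n) (r : Fin 2) (v : ZMod n × Fin 2) :
    v ∈ patt n p r ↔ ∃ j < (n+1)/2,
      v = (p + ((2*j : ℕ) : ZMod n), if j % 2 = 0 then r else r + 1) := by
  unfold patt
  simp only [Finset.mem_image, Finset.mem_range]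
  constructor
  · rintro ⟨j, hj, rfl⟩; exact ⟨j, hj, rfl⟩
  · rintro ⟨j, hj, rfl⟩; exact ⟨j, hj, rfl⟩

lemma patt_card {n : ℕ} (hn : 5 ≤ n) (hodd : n % 2 = 1) (p : ZMod n) (r : Fin 2) :
    (patt n p r).card = (n+1)/2 := by
  haveI : NeZero n := ⟨by omega⟩
  unfold patt
  rw [Finset.card_image_of_injOn, Finset.card_range]
  intro j1 h1 j2 h2 heq
  simp only [Finset.mem_coe, Finset.mem_range] at h1 h2
  have hc : ((2*j1 : ℕ) : ZMod n) = ((2*j2 : ℕ) : ZMod n) := by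
    have := congrArg Prod.fst heq
    simpa using this
  have := cast_inj (a := 2*j1) (b := 2*j2) (by omega) (by omega) hc
  omega

lemma patt_dom {n : ℕ} (hn : 5 ≤ n) (hodd : n % 2 = 1) (p : ZMod n) (r : Fin 2) :
    IsDominatingSet n ↑(patt n p r) := by
  haveI : NeZero n := ⟨by omega⟩
  intro v
  obtain ⟨i, s⟩ := v
  set k := (i - p).val with hk
  have hkn : k < n := ZMod.val_lt _
  have hik : i = p + (k : ZMod n) := by
    rw [hk, ZMod.natCast_val, ZMod.cast_id]; ring
  have hone : ((1:ℕ) : ZMod n) ≠ 0 := by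
    intro h
    have h5 : (1:ℕ) = 0 := cast_inj (n := n) (a := 1) (b := 0) (by omega) (by omega) (by simpa using h)
    omega
  rcases Nat.even_or_odd k with he | ⟨j, hj⟩
  · -- k = 2j, column i occupied
    obtain ⟨j, hj'⟩ := he
    have hj : k = 2 * j := by omega
    have hjm : j < (n+1)/2 := by omega
    set rj : Fin 2 := if j % 2 = 0 then r else r + 1 with hrj
    have hmem : (i, rj) ∈ patt n p r := by
      rw [mem_patt]
      refine ⟨j, hjm, ?_⟩
      rw [hik, hj]
    by_cases hs : s = rj
    · exact Or.inl (by rw [hs]; exact hmem)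
    · refine Or.inr ⟨(i, rj), hmem, ?_⟩
      refine ⟨by simp [Ne.symm hs], Or.inl ⟨rfl, Ne.symm hs⟩⟩
  · -- k = 2j+1 odd; k ≤ n-2 since n odd
    have hkn2 : k ≤ n - 2 := by omega
    have hjm : j + 1 < (n+1)/2 := by omega
    set rj : Fin 2 := if j % 2 = 0 then r else r + 1 with hrj
    set rj1 : Fin 2 := if (j+1) % 2 = 0 then r else r + 1 with hrj1
    have hmem1 : ((p + ((2*j:ℕ) : ZMod n)), rj) ∈ patt n p r := by
      rw [mem_patt]; exact ⟨j, by omega, rfl⟩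
    have hmem2 : ((p + ((2*(j+1):ℕ) : ZMod n)), rj1) ∈ patt n p r := by
      rw [mem_patt]; exact ⟨j+1, hjm, rfl⟩
    have hcol1 : i = (p + ((2*j:ℕ) : ZMod n)) + 1 := by
      rw [hik]; have : (k : ZMod n) = ((2*j:ℕ):ZMod n) + 1 := by
        rw [hj]; push_cast; ring
      rw [this]; ring
    have hcol2 : (p + ((2*(j+1):ℕ) : ZMod n)) = i + 1 := by
      rw [hik, hj]; push_cast; ring
    have hrjne : rj1 = rj + 1 := by
      rw [hrj, hrj1]
      rcases Nat.even_or_odd j with ⟨c,hc⟩|⟨c,hc⟩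
      · have h1 : j % 2 = 0 := by omega
        have h2 : (j+1) % 2 = 1 := by omega
        simp [h1, h2]
      · have h1 : j % 2 = 1 := by omega
        have h2 : (j+1) % 2 = 0 := by omega
        simp [h1, h2]
        fin_omega
    by_cases hs : s = rj
    · -- dominated by element at column i - 1
      refine Or.inr ⟨_, hmem1, ?_⟩
      constructor
      · intro h
        have := congrArg Prod.fst h
        simp only at this
        rw [hcol1] at this
        exact hone (by linear_combination -this)
      · exact Or.inr ⟨by simp [hs], Or.inr (by simpa using hcol1)⟩
    · have hs2 : s = rj1 := by rw [hrjne]; fin_omega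
      refine Or.inr ⟨_, hmem2, ?_⟩
      constructor
      · intro h
        have := congrArg Prod.fst h
        simp only at this
        rw [hcol2] at this
        exact hone (by linear_combination this)
      · exact Or.inr ⟨by simp [hs2], Or.inl (by simpa using hcol2)⟩

lemma patt_inj {n : ℕ} (hn : 5 ≤ n) (hodd : n % 2 = 1) {p p' : ZMod n} {r r' : Fin 2}
    (h : patt n p r = patt n p' r') : p = p' ∧ r = r' := by
  haveI : NeZero n := ⟨by omega⟩
  set m := (n+1)/2 with hm
  have hm3 : 3 ≤ m := by omega
  -- (p', r') ∈ patt n p' r' (j = 0)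
  have h0 : (p', r') ∈ patt n p r := by
    rw [h, mem_patt]; exact ⟨0, by omega, by simp⟩
  -- (p' - 1, _) ∈ patt n p' r' (j = m - 1)
  have h1 : (p' + ((2*(m-1):ℕ) : ZMod n), if (m-1) % 2 = 0 then r' else r' + 1) ∈ patt n p r := by
    rw [h, mem_patt]; exact ⟨m-1, by omega, rfl⟩
  rw [mem_patt] at h0 h1
  obtain ⟨j', hj', hv'⟩ := h0
  obtain ⟨j, hj, hv⟩ := h1
  have hp' : p' = p + ((2*j':ℕ) : ZMod n) := congrArg Prod.fst hv'
  have hcol : p' + ((2*(m-1):ℕ) : ZMod n) = p + ((2*j:ℕ) : ZMod n) := congrArg Prod.fst hv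
  -- so 2j' + 2(m-1) ≡ 2j (mod n)
  have hcc : (((2*j' + 2*(m-1)) : ℕ) : ZMod n) = ((2*j : ℕ) : ZMod n) := by
    push_cast
    push_cast at hp' hcol
    linear_combination hcol - hp'
  -- values
  have hval := congrArg ZMod.val hcc
  rw [ZMod.val_natCast, ZMod.val_natCast] at hval
  have h2j : (2*j) % n = 2*j := Nat.mod_eq_of_lt (by omega)
  rw [h2j] at hval
  -- 2j' + 2(m-1) < 2n, so mod is either itself or minus n
  have hlt : 2*j' + 2*(m-1) < 2*n := by omega
  have : (2*j' + 2*(m-1)) % n = if 2*j' + 2*(m-1) < n then 2*j' + 2*(m-1) else 2*j' + 2*(m-1) - n := by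
    split
    · exact Nat.mod_eq_of_lt (by omega)
    · rw [Nat.mod_eq_sub_mod (by omega), Nat.mod_eq_of_lt (by omega)]
  rw [this] at hval
  -- parity: n odd, 2j even: forced j' = 0? we get 2j'+2(m-1) ≥ n means =2j+n... derive j'=0
  have hj'0 : j' = 0 := by
    split at hval
    · omega
    · omega
  have hpp : p = p' := by rw [hp', hj'0]; simp
  refine ⟨hpp, ?_⟩
  have h9 := congrArg Prod.snd hv'
  simp only [hj'0] at h9
  exact h9.symm


-- ===== additional helpers =====

lemma index_ne {n : ℕ} [NeZero n] (x : ZMod n) {a b : ℕ} (ha : a < n) (hb : b < n)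
    (hab : a ≠ b) : x + (a : ZMod n) ≠ x + (b : ZMod n) :=
  fun h => hab (cast_inj ha hb (by linear_combination h))

lemma succ_cast {n : ℕ} (x : ZMod n) (k : ℕ) :
    x + ((k : ℕ) : ZMod n) + 1 = x + (((k+1) : ℕ) : ZMod n) := by push_cast; ring

lemma pred_cast {n : ℕ} (x : ZMod n) (k : ℕ) :
    x + (((k+1) : ℕ) : ZMod n) - 1 = x + ((k : ℕ) : ZMod n) := by push_cast; ring

lemma pm1 {n : ℕ} (hn : 5 ≤ n) (x : ZMod n) : x - 1 = x + (((n-1) : ℕ) : ZMod n) := by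
  rw [Nat.cast_sub (by omega), ZMod.natCast_self]; ring

lemma flipB {n : ℕ} {S : Finset (ZMod n × Fin 2)} (hdom : IsDominatingSet n ↑S)
    (i : ZMod n) (ht : t S i = 0) (h1 : t S (i-1) ≤ 1) (h2 : t S (i+1) ≤ 1) :
    ind S (i+1) 0 = ind S (i-1) 1 ∧ ind S (i+1) 1 = ind S (i-1) 0 := by
  have c0 := cov_pos hdom i 0
  have c1 := cov_pos hdom i 1
  have e0 : (0 : Fin 2) + 1 = 1 := rfl
  have e1 : (1 : Fin 2) + 1 = 0 := rfl
  unfold cov at c0 c1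
  rw [e0] at c0
  rw [e1] at c1
  unfold t at ht h1 h2
  have b1 := ind_le_one S (i-1) 0
  have b2 := ind_le_one S (i-1) 1
  have b3 := ind_le_one S (i+1) 0
  have b4 := ind_le_one S (i+1) 1
  omega

lemma card_lb {n : ℕ} (hn : 5 ≤ n) (hodd : n % 2 = 1) {S : Finset (ZMod n × Fin 2)}
    (hdom : IsDominatingSet n ↑S) : (n+1)/2 ≤ S.card := by
  haveI : NeZero n := ⟨by omega⟩
  have h1 : 2 * n ≤ ∑ i : ZMod n, g S i := by
    calc 2 * n = (Finset.univ : Finset (ZMod n)).card * 2 := by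
          rw [Finset.card_univ, ZMod.card]; ring
      _ = ∑ _i : ZMod n, 2 := by rw [Finset.sum_const, smul_eq_mul]
      _ ≤ _ := Finset.sum_le_sum fun i _ => g_ge_two hdom i
  rw [sum_g] at h1
  omega

lemma classify {n : ℕ} (hn : 5 ≤ n) (hodd : n % 2 = 1) {S : Finset (ZMod n × Fin 2)}
    (hdom : IsDominatingSet n ↑S) (hcard : S.card = (n+1)/2) :
    ∃ p r, S = patt n p r := by
  haveI : NeZero n := ⟨by omega⟩
  set m := (n+1)/2 with hm
  have hg2 : ∀ i, 2 ≤ g S i := g_ge_two hdom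
  have hsum : ∑ i : ZMod n, g S i = 2 * n + 2 := by rw [sum_g, hcard]; omega
  -- Step A : t ≤ 1 everywhere
  have hT : ∀ i, t S i ≤ 1 := by
    intro i
    by_contra hti
    push_neg at hti
    have h4 : g S i ≤ 4 := bound1 _ hg2 hsum i
    have hgi := g_eq S i
    have ht1 : t S (i-1) = 0 ∧ t S (i+1) = 0 ∧ t S i = 2 := by omega
    obtain ⟨hm1, hp1, hti2⟩ := ht1
    have hne1 : i + 1 ≠ i := by
      have := index_ne (n := n) i (a := 1) (b := 0) (by omega) (by omega) (by omega)
      simpa using this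
    have hne2 : i + 2 ≠ i := by
      have := index_ne (n := n) i (a := 2) (b := 0) (by omega) (by omega) (by omega)
      simpa using this
    have hne3 : i + 3 ≠ i := by
      have := index_ne (n := n) i (a := 3) (b := 0) (by omega) (by omega) (by omega)
      simpa using this
    have hb1 : g S (i+1) + g S i ≤ 6 := bound2 _ hg2 hsum hne1
    have hg1 := g_eq S (i+1)
    rw [add_sub_cancel_right] at hg1
    have ht2 : t S (i+1+1) = 0 := by omega
    have hb2 : g S (i+2) + g S i ≤ 6 := bound2 _ hg2 hsum hne2
    have hg2' := g_eq S (i+2)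
    have h23 := hg2 (i+2)
    have e1 : i + 2 - 1 = i + 1 := by ring
    have e2 : i + 1 + 1 = i + 2 := by ring
    have e3 : i + 2 + 1 = i + 3 := by ring
    rw [e1, e3] at hg2'
    rw [e2] at ht2
    have ht3 : t S (i+3) ≥ 2 := by omega
    have hb3 : g S (i+3) + g S i ≤ 6 := bound2 _ hg2 hsum hne3
    have hg3 := g_eq S (i+3)
    have h23 := hg2 (i+2)
    have h33 := hg2 (i+3)
    omega
  -- Step C : existence of adjacent occupied pair
  have hsumt : ∑ i : ZMod n, t S i = m := by rw [← card_eq_sum, hcard]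
  obtain ⟨p, hp1, hp0⟩ : ∃ p, t S (p - 1) = 1 ∧ t S p = 1 := by
    by_contra hno
    push_neg at hno
    set O := Finset.univ.filter (fun i => t S i = 1) with hO
    set Z := Finset.univ.filter (fun i => ¬ t S i = 1) with hZ
    have hOcard : O.card = m := by
      have h1 : ∑ i ∈ O, t S i = ∑ i : ZMod n, t S i := by
        refine Finset.sum_subset (Finset.filter_subset _ _) ?_
        intro x _ hx
        have h5 : t S x ≠ 1 := fun h => hx (Finset.mem_filter.2 ⟨Finset.mem_univ x, h⟩)
        have := hT x
        omega
      have h2 : ∑ i ∈ O, t S i = O.card := by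
        rw [Finset.sum_congr rfl (fun x hx => (Finset.mem_filter.1 hx).2), Finset.sum_const,
          smul_eq_mul, mul_one]
      calc O.card = ∑ i ∈ O, t S i := h2.symm
        _ = ∑ i : ZMod n, t S i := h1
        _ = m := hsumt
    have hinj : ∀ i ∈ O, (i - 1) ∈ Z := by
      intro i hi
      rw [Finset.mem_filter] at hi ⊢
      exact ⟨Finset.mem_univ _, fun hc => hno i hc hi.2⟩
    have hle : O.card ≤ Z.card := by
      refine Finset.card_le_card_of_injOn (fun i => i - 1) hinj ?_
      intro x _ y _ hxy
      have h := congrArg (· + 1) hxy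
      simpa using h
    have hpart : O.card + Z.card = n := by
      have h := Finset.card_filter_add_card_filter_not
        (s := (Finset.univ : Finset (ZMod n))) (p := fun i => t S i = 1)
      rw [Finset.card_univ, ZMod.card] at h
      rw [hO, hZ]
      exact h
    omega
  -- abbreviations and basic facts about the pair at p
  have hpm : p - 1 = p + (((n-1) : ℕ) : ZMod n) := pm1 hn p
  have hp1' : t S (p + (((n-1):ℕ) : ZMod n)) = 1 := by rw [← hpm]; exact hp1
  have hGmid : ∀ k : ℕ, g S (p + (((k+1):ℕ) : ZMod n)) =
      t S (p + ((k:ℕ) : ZMod n)) + 2 * t S (p + (((k+1):ℕ) : ZMod n))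
        + t S (p + (((k+1+1):ℕ) : ZMod n)) := by
    intro k
    have h := g_eq S (p + (((k+1):ℕ) : ZMod n))
    rw [pred_cast p k, succ_cast p (k+1)] at h
    exact h
  have hG0 : g S p = t S (p + (((n-1):ℕ) : ZMod n)) + 2 * t S p
      + t S (p + ((1:ℕ) : ZMod n)) := by
    have h := g_eq S p
    rw [hpm] at h
    have e : p + 1 = p + ((1:ℕ) : ZMod n) := by push_cast; ring
    rw [e] at h
    exact h
  have hne_pm : p - 1 ≠ p := by
    rw [hpm]
    have h := index_ne (n := n) p (a := n-1) (b := 0) (by omega) (by omega) (by omega)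
    simpa using h
  have hbp := bound2 _ hg2 hsum hne_pm
  have hgp1 : 3 ≤ g S (p-1) := by
    have h := g_eq S (p-1)
    rw [sub_add_cancel] at h
    have := hT (p-1-1)
    omega
  have hgp0 : 3 ≤ g S p := by
    have h := hG0
    omega
  have h6 : g S (p-1) + g S p = 6 := by omega
  have hgp0' : g S p = 3 := by omega
  have hT1 : t S (p + ((1:ℕ) : ZMod n)) = 0 := by
    have h := hG0
    omega
  have h2only : ∀ k : ℕ, 1 ≤ k → k ≤ n-2 → g S (p + ((k:ℕ) : ZMod n)) = 2 := by
    intro k h1k h2k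
    refine bound3 _ hg2 hsum hne_pm h6 ?_ ?_
    · rw [hpm]
      exact index_ne p (by omega) (by omega) (by omega)
    · have h := index_ne (n := n) p (a := k) (b := 0) (by omega) (by omega) (by omega)
      simpa using h
  -- Step D : structure of occupied columns
  have hD : ∀ j : ℕ, j ≤ m - 2 → t S (p + (((2*j+1):ℕ) : ZMod n)) = 0 ∧
      t S (p + (((2*j+2):ℕ) : ZMod n)) = 1 := by
    intro j
    induction j with
    | zero =>
      intro _
      have h2 := h2only 1 (by omega) (by omega)
      have hg1 := hGmid 0
      have hT1' := hT1
      push_cast at h2 hg1 hT1' ⊢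
      ring_nf at h2 hg1 hT1' ⊢
      refine ⟨hT1', by omega⟩
    | succ j ih =>
      intro hj
      obtain ⟨ih1, ih2⟩ := ih (by omega)
      have hA := hGmid (2*j+1)
      have hB := hGmid (2*j+2)
      have h2A := h2only (2*j+2) (by omega) (by omega)
      have h2B := h2only (2*j+3) (by omega) (by omega)
      push_cast at ih1 ih2 hA hB h2A h2B ⊢
      ring_nf at ih1 ih2 hA hB h2A h2B ⊢
      omega
  -- the chosen row at column p
  set r : Fin 2 := if (p, (0 : Fin 2)) ∈ S then 0 else 1 with hrdef
  have hr : ind S p r = 1 := by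
    by_cases h : (p, (0:Fin 2)) ∈ S
    · rw [hrdef, if_pos h, ind_eq_one_iff]
      exact h
    · rw [hrdef, if_neg h, ind_eq_one_iff]
      have h0 : ind S p 0 = 0 := by unfold ind; rw [if_neg h]
      have h1 := hp0
      unfold t at h1
      rw [← ind_eq_one_iff]
      omega
  -- Step E : rows alternate
  have claimE : ∀ j : ℕ, j ≤ m - 1 →
      ind S (p + (((2*j):ℕ) : ZMod n)) (if j % 2 = 0 then r else r + 1) = 1 := by
    intro j
    induction j with
    | zero =>
      intro _
      simpa using hr
    | succ j ih =>
      intro hj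
      have ihv := ih (by omega)
      have hemp : t S (p + (((2*j+1):ℕ) : ZMod n)) = 0 := (hD j (by omega)).1
      have hfl := flipB hdom (p + (((2*j+1):ℕ) : ZMod n)) hemp (hT _) (hT _)
      have e1 : (p + (((2*j+1):ℕ) : ZMod n)) - 1 = p + (((2*j):ℕ) : ZMod n) :=
        pred_cast p (2*j)
      have e2 : (p + (((2*j+1):ℕ) : ZMod n)) + 1 = p + (((2*(j+1)):ℕ) : ZMod n) := by
        push_cast; ring
      rw [e1, e2] at hfl
      rcases Nat.even_or_odd j with he | ho
      · have hj0 : j % 2 = 0 := Nat.even_iff.1 he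
        have hj1 : (j+1) % 2 ≠ 0 := by omega
        rw [if_pos hj0] at ihv
        rw [if_neg hj1]
        by_cases hr0 : r = 0
        · rw [hr0] at ihv ⊢
          rw [show (0:Fin 2)+1 = 1 from rfl, hfl.2]
          exact ihv
        · have hr1 : r = 1 := by fin_omega
          rw [hr1] at ihv ⊢
          rw [show (1:Fin 2)+1 = 0 from rfl, hfl.1]
          exact ihv
      · have hj0 : j % 2 ≠ 0 := by
          have := Nat.odd_iff.1 ho
          omega
        have hj1 : (j+1) % 2 = 0 := by
          have := Nat.odd_iff.1 ho
          omega
        rw [if_neg hj0] at ihv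
        rw [if_pos hj1]
        by_cases hr0 : r = 0
        · rw [hr0] at ihv ⊢
          rw [show (0:Fin 2)+1 = 1 from rfl] at ihv
          rw [hfl.1]
          exact ihv
        · have hr1 : r = 1 := by fin_omega
          rw [hr1] at ihv ⊢
          rw [show (1:Fin 2)+1 = 0 from rfl] at ihv
          rw [hfl.2]
          exact ihv
  -- conclude : patt n p r ⊆ S, hence equality by cardinality
  have hsub : patt n p r ⊆ S := by
    intro v hv
    rw [mem_patt] at hv
    obtain ⟨j, hjm, rfl⟩ := hv
    have h := claimE j (by omega)
    rw [ind_eq_one_iff] at h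
    exact h
  exact ⟨p, r, (Finset.eq_of_subset_of_card_le hsub
    (by rw [patt_card hn hodd, hcard])).symm⟩


lemma domNum_eq {n : ℕ} (hn : 5 ≤ n) (hodd : n % 2 = 1) : domNum n = (n+1)/2 := by
  haveI : NeZero n := ⟨by omega⟩
  have hmem : (n+1)/2 ∈ {k | ∃ S : Finset (ZMod n × Fin 2), S.card = k ∧ IsDominatingSet n ↑S} :=
    ⟨patt n 0 0, patt_card hn hodd 0 0, patt_dom hn hodd 0 0⟩
  apply le_antisymm
  · exact Nat.sInf_le hmem
  · refine le_csInf ⟨_, hmem⟩ ?_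
    rintro k ⟨S, rfl, hdom⟩
    exact card_lb hn hodd hdom

end PrismAux

theorem dominion_odd (n : ℕ) (hn : 5 ≤ n) (hodd : n % 2 = 1) :
    dominion n = 2 * n := by
  haveI : NeZero n := ⟨by omega⟩
  unfold dominion
  have hset : {S : Finset (ZMod n × Fin 2) | S.card = domNum n ∧ IsDominatingSet n ↑S} =
      Set.range (fun q : ZMod n × Fin 2 => PrismAux.patt n q.1 q.2) := by
    ext S
    simp only [Set.mem_setOf_eq, Set.mem_range]
    constructor
    · rintro ⟨hcard, hdom⟩
      obtain ⟨p, r, rfl⟩ := PrismAux.classify hn hodd hdom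
        (by rw [hcard, PrismAux.domNum_eq hn hodd])
      exact ⟨(p, r), rfl⟩
    · rintro ⟨⟨p, r⟩, rfl⟩
      exact ⟨by rw [PrismAux.patt_card hn hodd, PrismAux.domNum_eq hn hodd],
        PrismAux.patt_dom hn hodd p r⟩
  rw [hset, ← Set.image_univ,
    Set.ncard_image_of_injective _ (fun q q' h => ?_), Set.ncard_univ,
    Nat.card_eq_fintype_card, Fintype.card_prod, ZMod.card, Fintype.card_fin]
  · ring
  · obtain ⟨h1, h2⟩ := PrismAux.patt_inj hn hodd h
    exact Prod.ext h1 h2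
end

section
/- If n ≡ 2 (mod 4) and n ≥ 10, then the dominion of the prism graph satisfies ζ(G_n) = n(n+2). -/
set_option linter.unusedSectionVars false


namespace PrismDom


/-- the letter `A` if `x`, else `B`. -/
def AB (x : Bool) : Bool × Bool := (x, !x)

def bits (v : Bool × Bool) : ℕ := (if v.1 then 1 else 0) + (if v.2 then 1 else 0)

section
variable (n : ℕ) [NeZero n]

/-- weight of a word -/
def wt (w : ZMod n → Bool × Bool) : ℕ := ∑ i, bits (w i)

/-- word-level domination -/
def DomW (w : ZMod n → Bool × Bool) : Prop := ∀ i : ZMod n,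
  ((w i).1 = true ∨ (w i).2 = true ∨ (w (i-1)).1 = true ∨ (w (i+1)).1 = true) ∧
  ((w i).2 = true ∨ (w i).1 = true ∨ (w (i-1)).2 = true ∨ (w (i+1)).2 = true)

def colFinset (w : ZMod n → Bool × Bool) : Finset (ZMod n × Fin 2) :=
  Finset.univ.filter (fun v => (if v.2 = 0 then (w v.1).1 else (w v.1).2) = true)

variable {n}

lemma wordSet_eq (w : ZMod n → Bool × Bool) : wordSet n w = ↑(colFinset n w) := by
  ext v; simp [wordSet, colFinset]

lemma card_colFinset (w : ZMod n → Bool × Bool) : (colFinset n w).card = wt n w := by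
  classical
  rw [colFinset, Finset.card_filter, Fintype.sum_prod_type, wt]
  refine Finset.sum_congr rfl fun i _ => ?_
  rw [Fin.sum_univ_two]
  simp [bits, Nat.add_comm]

lemma colFinset_injective : Function.Injective (colFinset n) := by
  intro w w' h
  funext i
  have h0 : ((i, (0:Fin 2)) ∈ colFinset n w) ↔ ((i, (0:Fin 2)) ∈ colFinset n w') := by rw [h]
  have h1 : ((i, (1:Fin 2)) ∈ colFinset n w) ↔ ((i, (1:Fin 2)) ∈ colFinset n w') := by rw [h]
  simp only [colFinset, Finset.mem_filter, Finset.mem_univ, true_and] at h0 h1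
  norm_num at h0 h1
  exact Prod.ext h0 h1

lemma one_ne_zero' (hn : 2 ≤ n) : (1 : ZMod n) ≠ 0 := by
  have : ((1:ℕ) : ZMod n) ≠ 0 := by
    rw [Ne, ZMod.natCast_eq_zero_iff]
    intro h; have := Nat.le_of_dvd one_pos h; omega
  simpa using this

/-- the key translation: `IsDominatingSet` for a word's set is `DomW`. -/
lemma isDominating_iff_domW (hn : 2 ≤ n) (w : ZMod n → Bool × Bool) :
    IsDominatingSet n (wordSet n w) ↔ DomW n w := by
  have h1 : (1 : ZMod n) ≠ 0 := one_ne_zero' hn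
  constructor
  · intro hd i
    constructor
    · rcases hd (i, 0) with hv | ⟨⟨j, s⟩, hu, hne, hadj⟩
      · simp only [wordSet, Set.mem_setOf_eq, if_pos rfl] at hv
        exact Or.inl hv
      · simp only [wordSet, Set.mem_setOf_eq] at hu
        rcases hadj with ⟨hj, hs⟩ | ⟨hs, hj⟩
        · have hs1 : s = 1 := by fin_cases s <;> simp_all
          have hj' : j = i := hj
          subst hs1 hj'; simp only [if_neg (by norm_num : (1:Fin 2) ≠ 0)] at hu
          exact Or.inr (Or.inl hu)
        · have hs' : s = 0 := hs
          subst hs'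
          simp only [if_pos rfl] at hu
          rcases hj with hj | hj
          · have hj' : j = i + 1 := hj
            right; right; right; rw [← hj']; exact hu
          · have hj' : i = j + 1 := hj
            right; right; left
            have : j = i - 1 := by rw [hj']; ring
            rw [← this]; exact hu
    · rcases hd (i, 1) with hv | ⟨⟨j, s⟩, hu, hne, hadj⟩
      · simp only [wordSet, Set.mem_setOf_eq, if_neg (by norm_num : (1:Fin 2) ≠ 0)] at hv
        exact Or.inl hv
      · simp only [wordSet, Set.mem_setOf_eq] at hu
        rcases hadj with ⟨hj, hs⟩ | ⟨hs, hj⟩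
        · have hs1 : s = 0 := by fin_cases s <;> simp_all
          have hj' : j = i := hj
          subst hs1 hj'; simp only [if_pos rfl] at hu
          exact Or.inr (Or.inl hu)
        · have hs' : s = 1 := hs
          subst hs'
          simp only [if_neg (by norm_num : (1:Fin 2) ≠ 0)] at hu
          rcases hj with hj | hj
          · have hj' : j = i + 1 := hj
            right; right; right; rw [← hj']; exact hu
          · have hj' : i = j + 1 := hj
            right; right; left
            have : j = i - 1 := by rw [hj']; ring
            rw [← this]; exact hu
  · intro hd v
    obtain ⟨i, r⟩ := v
    fin_cases r
    · rcases (hd i).1 with h | h | h | h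
      · left; simpa [wordSet] using h
      · right
        refine ⟨(i, 1), by simpa [wordSet] using h, ?_⟩
        exact ⟨by simp, Or.inl ⟨rfl, by norm_num⟩⟩
      · right
        refine ⟨(i - 1, 0), by simpa [wordSet] using h, ?_⟩
        refine ⟨?_, Or.inr ⟨rfl, Or.inr (by ring)⟩⟩
        simp only [Ne, Prod.mk.injEq, not_and]
        intro hc; exfalso; apply h1; linear_combination (norm := ring_nf) -hc
      · right
        refine ⟨(i + 1, 0), by simpa [wordSet] using h, ?_⟩
        refine ⟨?_, Or.inr ⟨rfl, Or.inl (by ring)⟩⟩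
        simp only [Ne, Prod.mk.injEq, not_and]
        intro hc; exfalso; apply h1; linear_combination (norm := ring_nf) hc
    · rcases (hd i).2 with h | h | h | h
      · left; simpa [wordSet] using h
      · right
        refine ⟨(i, 0), by simpa [wordSet] using h, ?_⟩
        exact ⟨by simp, Or.inl ⟨rfl, by norm_num⟩⟩
      · right
        refine ⟨(i - 1, 1), by simpa [wordSet] using h, ?_⟩
        refine ⟨?_, Or.inr ⟨rfl, Or.inr (by ring)⟩⟩
        simp only [Ne, Prod.mk.injEq, not_and]
        intro hc; exfalso; apply h1; linear_combination (norm := ring_nf) -hc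
      · right
        refine ⟨(i + 1, 1), by simpa [wordSet] using h, ?_⟩
        refine ⟨?_, Or.inr ⟨rfl, Or.inl (by ring)⟩⟩
        simp only [Ne, Prod.mk.injEq, not_and]
        intro hc; exfalso; apply h1; linear_combination (norm := ring_nf) hc

end

section
variable {n : ℕ} [NeZero n]

/-- reindex a sum over `ZMod n` by translation -/
lemma sum_shift (f : ZMod n → ℕ) (c : ZMod n) : ∑ i : ZMod n, f (i + c) = ∑ i : ZMod n, f i :=
  Fintype.sum_equiv (Equiv.addRight c) _ _ (fun _ => rfl)

lemma card_filter_shift (p : ZMod n → Prop) [DecidablePred p] (c : ZMod n) :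
    (Finset.univ.filter (fun i => p (i + c))).card = (Finset.univ.filter p).card := by
  rw [Finset.card_filter, Finset.card_filter]
  exact sum_shift (fun i => if p i then (1:ℕ) else 0) c

/-- sum over `ZMod n` as sum over offsets from a base point -/
lemma sum_offsets (f : ZMod n → ℕ) (q : ZMod n) :
    ∑ i : ZMod n, f i = ∑ j ∈ Finset.range n, f (q + (j : ℕ)) := by
  refine Finset.sum_nbij' (i := fun i : ZMod n => (i - q).val)
    (j := fun j : ℕ => q + (j : ℕ)) ?_ ?_ ?_ ?_ ?_
  · intro i _; exact Finset.mem_range.2 (ZMod.val_lt _)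
  · intro j _; exact Finset.mem_univ _
  · intro i _
    beta_reduce
    rw [ZMod.natCast_val, ZMod.cast_id]; ring
  · intro j hj
    rw [Finset.mem_range] at hj
    beta_reduce
    rw [add_sub_cancel_left, ZMod.val_natCast, Nat.mod_eq_of_lt hj]
  · intro i _
    beta_reduce
    congr 1
    rw [ZMod.natCast_val, ZMod.cast_id]; ring

def tN (w : ZMod n → Bool × Bool) : ℕ := (Finset.univ.filter (fun i => (w i).1 = true)).card
def bN (w : ZMod n → Bool × Bool) : ℕ := (Finset.univ.filter (fun i => (w i).2 = true)).card

lemma wt_eq_tN_add_bN (w : ZMod n → Bool × Bool) : wt n w = tN w + bN w := by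
  rw [wt, tN, bN, Finset.card_filter, Finset.card_filter, ← Finset.sum_add_distrib]
  rfl

lemma lower_ineq_top (w : ZMod n → Bool × Bool) (hd : DomW n w) :
    n ≤ 3 * tN w + bN w := by
  classical
  have h1 : (n : ℕ) = ∑ _i : ZMod n, 1 := by
    rw [Finset.sum_const, smul_eq_mul, mul_one, Finset.card_univ, ZMod.card]
  have h2 : ∀ i : ZMod n, 1 ≤ (if (w i).1 = true then 1 else 0) + ((if (w i).2 = true then 1 else 0)
      + ((if (w (i-1)).1 = true then 1 else 0) + (if (w (i+1)).1 = true then 1 else 0))) := by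
    intro i
    rcases (hd i).1 with h | h | h | h <;> split_ifs <;> simp_all
  calc (n:ℕ) = ∑ _i : ZMod n, 1 := h1
    _ ≤ ∑ i : ZMod n, ((if (w i).1 = true then 1 else 0) + ((if (w i).2 = true then 1 else 0)
      + ((if (w (i-1)).1 = true then 1 else 0) + (if (w (i+1)).1 = true then 1 else 0)))) :=
        Finset.sum_le_sum (fun i _ => h2 i)
    _ = 3 * tN w + bN w := by
        rw [Finset.sum_add_distrib, Finset.sum_add_distrib, Finset.sum_add_distrib]
        have e1 : ∑ i : ZMod n, (if (w (i-1)).1 = true then 1 else 0)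
            = ∑ i : ZMod n, (if (w i).1 = true then 1 else 0) := by
          have := sum_shift (fun i => if (w i).1 = true then 1 else 0) (-1)
          simpa [sub_eq_add_neg] using this
        have e2 : ∑ i : ZMod n, (if (w (i+1)).1 = true then 1 else 0)
            = ∑ i : ZMod n, (if (w i).1 = true then 1 else 0) := by
          exact sum_shift (fun i => if (w i).1 = true then 1 else 0) 1
        rw [e1, e2, tN, bN, Finset.card_filter, Finset.card_filter]
        ring
lemma lower_ineq_bot (w : ZMod n → Bool × Bool) (hd : DomW n w) :
    n ≤ tN w + 3 * bN w := by
  classical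
  have h1 : (n : ℕ) = ∑ _i : ZMod n, 1 := by
    rw [Finset.sum_const, smul_eq_mul, mul_one, Finset.card_univ, ZMod.card]
  have h2 : ∀ i : ZMod n, 1 ≤ (if (w i).2 = true then 1 else 0) + ((if (w i).1 = true then 1 else 0)
      + ((if (w (i-1)).2 = true then 1 else 0) + (if (w (i+1)).2 = true then 1 else 0))) := by
    intro i
    rcases (hd i).2 with h | h | h | h <;> split_ifs <;> simp_all
  calc (n:ℕ) = ∑ _i : ZMod n, 1 := h1
    _ ≤ ∑ i : ZMod n, ((if (w i).2 = true then 1 else 0) + ((if (w i).1 = true then 1 else 0)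
      + ((if (w (i-1)).2 = true then 1 else 0) + (if (w (i+1)).2 = true then 1 else 0)))) :=
        Finset.sum_le_sum (fun i _ => h2 i)
    _ = tN w + 3 * bN w := by
        rw [Finset.sum_add_distrib, Finset.sum_add_distrib, Finset.sum_add_distrib]
        have e1 : ∑ i : ZMod n, (if (w (i-1)).2 = true then 1 else 0)
            = ∑ i : ZMod n, (if (w i).2 = true then 1 else 0) := by
          have := sum_shift (fun i => if (w i).2 = true then 1 else 0) (-1)
          simpa [sub_eq_add_neg] using this
        have e2 : ∑ i : ZMod n, (if (w (i+1)).2 = true then 1 else 0)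
            = ∑ i : ZMod n, (if (w i).2 = true then 1 else 0) := by
          exact sum_shift (fun i => if (w i).2 = true then 1 else 0) 1
        rw [e1, e2, tN, bN, Finset.card_filter, Finset.card_filter]
        ring

lemma wt_lower (w : ZMod n → Bool × Bool) (hd : DomW n w) (hmod : n % 4 = 2) :
    n / 2 + 1 ≤ wt n w := by
  have h1 := lower_ineq_top w hd
  have h2 := lower_ineq_bot w hd
  have h3 := wt_eq_tN_add_bN (n := n) w
  omega

end

/-! ### counting helpers on `range` -/

lemma card_odd_range (m : ℕ) :
    ((Finset.range m).filter (fun j => j % 2 = 1)).card = m / 2 := by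
  induction m with
  | zero => simp
  | succ m ih =>
    rw [Finset.range_add_one, Finset.filter_insert]
    by_cases h : m % 2 = 1
    · rw [if_pos h, Finset.card_insert_of_notMem (by simp)]
      omega
    · rw [if_neg h]
      omega

lemma card_even_range (m : ℕ) :
    ((Finset.range m).filter (fun j => j % 2 = 0)).card = (m + 1) / 2 := by
  induction m with
  | zero => simp
  | succ m ih =>
    rw [Finset.range_add_one, Finset.filter_insert]
    by_cases h : m % 2 = 0
    · rw [if_pos h, Finset.card_insert_of_notMem (by simp)]
      omega
    · rw [if_neg h]
      omega

lemma decide_succ_mod_two (u : ℕ) : decide ((u + 1) % 2 = 1) = !decide (u % 2 = 1) := by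
  rcases Nat.mod_two_eq_zero_or_one u with h | h <;> simp [Nat.add_mod, h]

lemma pred_mod (n e : ℕ) (h1 : 1 ≤ e) (h2 : e < n) : (e + (n-1)) % n = e - 1 := by
  have h3 : e + (n - 1) = n + (e - 1) := by omega
  rw [h3, Nat.add_mod_left, Nat.mod_eq_of_lt (by omega)]

lemma succ_mod (n e : ℕ) (h2 : e + 1 < n) : (e + 1) % n = e + 1 :=
  Nat.mod_eq_of_lt h2

lemma xor_not_right' (s b : Bool) : xor s (!b) = !(xor s b) := by
  cases s <;> cases b <;> rfl

section
variable {n : ℕ} [NeZero n]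

lemma AB_or_left (c : Bool) : (AB c).1 = true ∨ (AB c).2 = true := by
  cases c <;> simp [AB]

lemma AB_pair_or (c : Bool) :
    ((AB c).1 = true ∨ (AB (!c)).1 = true) ∧ ((AB c).2 = true ∨ (AB (!c)).2 = true) := by
  cases c <;> simp [AB]

lemma bits_AB (c : Bool) : bits (AB c) = 1 := by cases c <;> rfl

lemma AB_ne_letC (c : Bool) : AB c ≠ letC := by cases c <;> simp [AB, letC]
lemma AB_ne_letD (c : Bool) : AB c ≠ letD := by cases c <;> simp [AB, letD]

/-- decompose any element as base point plus an offset `< n`. -/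
lemma exists_offset (p i : ZMod n) : i = p + ((i - p).val : ℕ) := by
  rw [ZMod.natCast_val, ZMod.cast_id]; ring

lemma offset_eval (p : ZMod n) (g : ℕ → Bool × Bool) (j : ℕ) :
    (fun i => g ((i - p).val)) (p + (j : ℕ)) = g (j % n) := by
  simp only [add_sub_cancel_left, ZMod.val_natCast]

lemma natCast_sub_one (hn : 1 ≤ n) : ((n - 1 : ℕ) : ZMod n) = -1 := by
  have h : ((n : ℕ) : ZMod n) = 0 := ZMod.natCast_self n
  rw [Nat.cast_sub hn, h, Nat.cast_one, zero_sub]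

lemma offset_pred (p i : ZMod n) :
    ((i - 1) - p).val = ((i - p).val + (n - 1)) % n := by
  have hn : 1 ≤ n := Nat.one_le_iff_ne_zero.2 (NeZero.ne n)
  have : (i - 1) - p = (((i - p).val + (n - 1) : ℕ) : ZMod n) := by
    push_cast
    rw [natCast_sub_one hn, ZMod.natCast_val, ZMod.cast_id]; ring
  rw [this, ZMod.val_natCast]

lemma offset_succ (p i : ZMod n) :
    ((i + 1) - p).val = ((i - p).val + 1) % n := by
  have : (i + 1) - p = (((i - p).val + 1 : ℕ) : ZMod n) := by
    push_cast
    rw [ZMod.natCast_val, ZMod.cast_id]; ring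
  rw [this, ZMod.val_natCast]

/-- domination criterion for an offset-defined word -/
lemma domW_offsets (p : ZMod n) (g : ℕ → Bool × Bool)
    (h : ∀ e, e < n →
      (((g e).1 = true ∨ (g e).2 = true ∨ (g ((e + (n-1)) % n)).1 = true ∨ (g ((e+1) % n)).1 = true) ∧
       ((g e).2 = true ∨ (g e).1 = true ∨ (g ((e + (n-1)) % n)).2 = true ∨ (g ((e+1) % n)).2 = true))) :
    DomW n (fun i => g ((i - p).val)) := by
  intro i
  have he : (i - p).val < n := ZMod.val_lt _
  have h1 := offset_pred p i
  have h2 := offset_succ p i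
  have := h _ he
  simp only []
  rw [h1, h2]
  exact this

lemma wt_offsets (p : ZMod n) (g : ℕ → Bool × Bool) :
    wt n (fun i => g ((i - p).val)) = ∑ j ∈ Finset.range n, bits (g j) := by
  rw [wt, sum_offsets (fun i => bits ((fun i => g ((i - p).val)) i)) p]
  refine Finset.sum_congr rfl fun j hj => ?_
  rw [Finset.mem_range] at hj
  rw [offset_eval, Nat.mod_eq_of_lt hj]

/-! ### the two explicit families -/

def fI (s : Bool) (e : ℕ) : Bool × Bool :=
  if e % 2 = 1 then letC else if e = 0 then letD else AB (xor s (decide ((e / 2) % 2 = 1)))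

def wI (n : ℕ) [NeZero n] (q : ZMod n) (s : Bool) : ZMod n → Bool × Bool :=
  fun i => fI s ((i - q).val)

def fII (n a : ℕ) (x y : Bool) (e : ℕ) : Bool × Bool :=
  if e = 0 then AB x
  else if e % 2 = 1 then (if e ≤ a then AB (xor y (decide (((e-1)/2) % 2 = 1))) else letC)
  else (if a < e then AB (xor x (decide (((n - e)/2) % 2 = 1))) else letC)

def wII (n : ℕ) [NeZero n] (p q : ZMod n) (x y : Bool) : ZMod n → Bool × Bool :=
  fun i => fII n ((q - p).val) x y ((i - p).val)

lemma domW_wI (hn : 10 ≤ n) (hev : n % 2 = 0) (q : ZMod n) (s : Bool) :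
    DomW n (wI n q s) := by
  refine domW_offsets q _ (fun e he => ?_)
  by_cases hodd : e % 2 = 1
  · -- a C column
    have hC : fI s e = letC := by rw [fI, if_pos hodd]
    rw [hC]
    have h1 : e ≠ 0 := by omega
    rcases eq_or_ne e 1 with he1 | hne1
    · -- left neighbour is the D
      have : (e + (n-1)) % n = 0 := by
        have h4 : e + (n - 1) = n := by omega
        rw [h4, Nat.mod_self]
      rw [this]
      have : fI s 0 = letD := by rfl
      rw [this]
      exact ⟨Or.inr (Or.inr (Or.inl rfl)), Or.inr (Or.inr (Or.inl rfl))⟩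
    · rcases eq_or_ne e (n-1) with hen | hnen
      · -- right neighbour is the D
        have : (e + 1) % n = 0 := by
          have h4 : e + 1 = n := by omega
          rw [h4, Nat.mod_self]
        rw [this]
        have : fI s 0 = letD := by rfl
        rw [this]
        exact ⟨Or.inr (Or.inr (Or.inr rfl)), Or.inr (Or.inr (Or.inr rfl))⟩
      · -- two proper letters, complementary
        have hl : (e + (n-1)) % n = e - 1 := pred_mod n e (by omega) (by omega)
        have hr : (e + 1) % n = e + 1 := succ_mod n e (by omega)
        rw [hl, hr]
        have hL : fI s (e-1) = AB (xor s (decide (((e-1) / 2) % 2 = 1))) := by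
          rw [fI, if_neg (by omega), if_neg (by omega)]
        have hR : fI s (e+1) = AB (xor s (decide (((e+1) / 2) % 2 = 1))) := by
          rw [fI, if_neg (by omega), if_neg (by omega)]
        have hdiv : (e+1)/2 = (e-1)/2 + 1 := by omega
        rw [hL, hR, hdiv, decide_succ_mod_two, xor_not_right']
        have := AB_pair_or (xor s (decide (((e-1) / 2) % 2 = 1)))
        exact ⟨Or.inr (Or.inr this.1), Or.inr (Or.inr this.2)⟩
  · -- a letter or D column: dominated by itself
    rcases eq_or_ne e 0 with h0 | h0
    · have : fI s e = letD := by rw [h0]; rfl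
      rw [this]
      exact ⟨Or.inl rfl, Or.inl rfl⟩
    · have : fI s e = AB (xor s (decide ((e / 2) % 2 = 1))) := by
        rw [fI, if_neg hodd, if_neg h0]
      rw [this]
      rcases AB_or_left (xor s (decide ((e / 2) % 2 = 1))) with h | h
      · exact ⟨Or.inl h, Or.inr (Or.inl h)⟩
      · exact ⟨Or.inr (Or.inl h), Or.inl h⟩

lemma bits_fI (s : Bool) (e : ℕ) :
    bits (fI s e) = if e = 0 then 2 else if e % 2 = 1 then 0 else 1 := by
  rw [fI]
  by_cases h1 : e % 2 = 1
  · rw [if_pos h1, if_neg (by omega), if_pos h1]; rfl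
  · rw [if_neg h1]
    rcases eq_or_ne e 0 with h0 | h0
    · rw [if_pos h0, if_pos h0]; rfl
    · rw [if_neg h0, if_neg h0, if_neg h1, bits_AB]

lemma wt_wI (hn : 10 ≤ n) (hev : n % 2 = 0) (q : ZMod n) (s : Bool) :
    wt n (wI n q s) = n / 2 + 1 := by
  show wt n (fun i => fI s ((i - q).val)) = n / 2 + 1
  rw [wt_offsets]
  have h1 : ∀ j ∈ Finset.range n, bits (fI s j)
      = (if j % 2 = 0 then 1 else 0) + (if j = 0 then 1 else 0) := by
    intro j _
    rw [bits_fI]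
    rcases Nat.mod_two_eq_zero_or_one j with h | h <;> rcases eq_or_ne j 0 with h0 | h0 <;>
      simp [h, h0] <;> omega
  rw [Finset.sum_congr rfl h1, Finset.sum_add_distrib]
  have h2 : ∑ j ∈ Finset.range n, (if j % 2 = 0 then 1 else 0) = (n+1)/2 := by
    rw [← Finset.card_filter]
    exact card_even_range n
  have h3 : ∑ j ∈ Finset.range n, (if j = 0 then 1 else 0) = 1 := by
    rw [Finset.sum_ite_eq' (Finset.range n) 0 (fun _ => 1)]
    rw [if_pos (Finset.mem_range.2 (by omega))]
  rw [h2, h3]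
  omega

end

section
variable {n : ℕ} [NeZero n]

lemma fII_letter_cases (a : ℕ) (x y : Bool) (e : ℕ)
    (h : e = 0 ∨ (e % 2 = 1 ∧ e ≤ a) ∨ (e % 2 = 0 ∧ a < e)) :
    ∃ c, fII n a x y e = AB c := by
  rcases h with h0 | ⟨h1, h2⟩ | ⟨h1, h2⟩
  · exact ⟨x, by rw [fII, if_pos h0]⟩
  · refine ⟨xor y (decide (((e-1)/2) % 2 = 1)), ?_⟩
    rw [fII, if_neg (by omega), if_pos h1, if_pos h2]
  · rcases eq_or_ne e 0 with h0 | h0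
    · exact ⟨x, by rw [fII, if_pos h0]⟩
    · refine ⟨xor x (decide (((n - e)/2) % 2 = 1)), ?_⟩
      rw [fII, if_neg h0, if_neg (by omega), if_pos h2]

lemma fII_C_cases (a : ℕ) (x y : Bool) (e : ℕ)
    (h : ¬(e = 0 ∨ (e % 2 = 1 ∧ e ≤ a) ∨ (e % 2 = 0 ∧ a < e))) :
    fII n a x y e = letC := by
  push_neg at h
  obtain ⟨h0, h1, h2⟩ := h
  rcases Nat.mod_two_eq_zero_or_one e with hp | hp
  · rw [fII, if_neg h0, if_neg (by omega), if_neg (by have := h2 hp; omega)]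
  · rw [fII, if_neg h0, if_pos hp, if_neg (by have := h1 hp; omega)]

lemma domW_wII (hn : 10 ≤ n) (hev : n % 2 = 0) (p q : ZMod n) (x y : Bool)
    (ha : ((q - p).val) % 2 = 1) :
    DomW n (wII n p q x y) := by
  set a := (q - p).val with hadef
  have halt : a < n := ZMod.val_lt _
  refine domW_offsets p _ (fun e he => ?_)
  by_cases hlet : e = 0 ∨ (e % 2 = 1 ∧ e ≤ a) ∨ (e % 2 = 0 ∧ a < e)
  · obtain ⟨c, hc⟩ := fII_letter_cases (n := n) a x y e hlet
    rw [hc]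
    rcases AB_or_left c with h | h
    · exact ⟨Or.inl h, Or.inr (Or.inl h)⟩
    · exact ⟨Or.inr (Or.inl h), Or.inl h⟩
  · rw [fII_C_cases (n := n) a x y e hlet]
    push_neg at hlet
    obtain ⟨h0, h1, h2⟩ := hlet
    -- C positions: even `e` with `2 ≤ e < a`, or odd `e` with `a + 2 ≤ e ≤ n - 1`
    rcases Nat.mod_two_eq_zero_or_one e with hp | hp
    · -- even, 2 ≤ e < a (hence e+1 ≤ a, e-1 ≥ 1, both odd ≤ a)
      have hea : e ≤ a := by have := h2 hp; omega
      have he2 : 2 ≤ e := by omega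
      have hlta : e + 1 ≤ a := by omega
      have hl : (e + (n-1)) % n = e - 1 := pred_mod n e (by omega) (by omega)
      have hr : (e + 1) % n = e + 1 := succ_mod n e (by omega)
      rw [hl, hr]
      have hL : fII n a x y (e-1) = AB (xor y (decide (((e-2)/2) % 2 = 1))) := by
        rw [fII, if_neg (by omega), if_pos (by omega), if_pos (by omega)]
        congr 2
      have hR : fII n a x y (e+1) = AB (xor y (decide ((e/2) % 2 = 1))) := by
        rw [fII, if_neg (by omega), if_pos (by omega), if_pos (by omega)]
        congr 3
      have hdiv : e/2 = (e-2)/2 + 1 := by omega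
      rw [hL, hR, hdiv, decide_succ_mod_two, xor_not_right']
      have := AB_pair_or (xor y (decide (((e-2)/2) % 2 = 1)))
      exact ⟨Or.inr (Or.inr this.1), Or.inr (Or.inr this.2)⟩
    · -- odd, a + 2 ≤ e ≤ n - 1
      have hea : a + 2 ≤ e := by have := h1 hp; omega
      have hl : (e + (n-1)) % n = e - 1 := pred_mod n e (by omega) (by omega)
      rw [hl]
      have hL : fII n a x y (e-1) = AB (xor x (decide (((n - (e-1))/2) % 2 = 1))) := by
        rw [fII, if_neg (by omega), if_neg (by omega), if_pos (by omega)]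
      rcases eq_or_ne e (n-1) with hen | hen
      · -- right neighbour is the base point `p`
        have hr : (e + 1) % n = 0 := by
          have h4 : e + 1 = n := by omega
          rw [h4, Nat.mod_self]
        rw [hr]
        have hR : fII n a x y 0 = AB x := by rw [fII, if_pos rfl]
        have hxl : (n - (e-1))/2 = 1 := by omega
        rw [hL, hR, hxl]
        have h1d : decide ((1:ℕ) % 2 = 1) = true := by decide
        rw [h1d]
        have hxx : xor x true = !x := by cases x <;> rfl
        rw [hxx]
        constructor
        · refine Or.inr (Or.inr ?_)
          cases x <;> simp [AB]
        · refine Or.inr (Or.inr ?_)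
          cases x <;> simp [AB]
      · have hr : (e + 1) % n = e + 1 := succ_mod n e (by omega)
        rw [hr]
        have hR : fII n a x y (e+1) = AB (xor x (decide (((n - (e+1))/2) % 2 = 1))) := by
          rw [fII, if_neg (by omega), if_neg (by omega), if_pos (by omega)]
        have hdiv : (n - (e-1))/2 = (n - (e+1))/2 + 1 := by omega
        rw [hL, hR, hdiv, decide_succ_mod_two, xor_not_right']
        have := AB_pair_or (xor x (decide (((n - (e+1))/2) % 2 = 1)))
        exact ⟨Or.inr (Or.inr this.1.symm), Or.inr (Or.inr this.2.symm)⟩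

lemma bits_fII (a : ℕ) (x y : Bool) (e : ℕ) :
    bits (fII n a x y e) = if e = 0 ∨ (e % 2 = 1 ∧ e ≤ a) ∨ (e % 2 = 0 ∧ a < e) then 1 else 0 := by
  by_cases h : e = 0 ∨ (e % 2 = 1 ∧ e ≤ a) ∨ (e % 2 = 0 ∧ a < e)
  · obtain ⟨c, hc⟩ := fII_letter_cases (n := n) a x y e h
    rw [hc, if_pos h, bits_AB]
  · rw [fII_C_cases (n := n) a x y e h, if_neg h]; rfl

lemma wt_wII (hn : 10 ≤ n) (hev : n % 2 = 0) (p q : ZMod n) (x y : Bool)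
    (ha : ((q - p).val) % 2 = 1) :
    wt n (wII n p q x y) = n / 2 + 1 := by
  set a := (q - p).val with hadef
  have halt : a < n := ZMod.val_lt _
  show wt n (fun i => fII n a x y ((i - p).val)) = n / 2 + 1
  rw [wt_offsets]
  have h1 : ∀ j ∈ Finset.range n, bits (fII n a x y j)
      = (if j = 0 then 1 else 0) + ((if j % 2 = 1 ∧ j ≤ a then 1 else 0)
        + (if j % 2 = 0 ∧ a < j then 1 else 0)) := by
    intro j _
    rw [bits_fII]
    by_cases h0 : j = 0
    · subst h0
      rw [if_pos (Or.inl (rfl : (0:ℕ) = 0)), if_pos (rfl : (0:ℕ) = 0),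
        if_neg (by omega), if_neg (by omega)]
    · rcases Nat.mod_two_eq_zero_or_one j with hp | hp
      · by_cases hja : a < j
        · rw [if_pos (Or.inr (Or.inr ⟨hp, hja⟩)), if_neg h0, if_neg (by omega), if_pos ⟨hp, hja⟩]
        · rw [if_neg (by omega), if_neg h0, if_neg (by omega), if_neg (by omega)]
      · by_cases hja : j ≤ a
        · rw [if_pos (Or.inr (Or.inl ⟨hp, hja⟩)), if_neg h0, if_pos ⟨hp, hja⟩, if_neg (by omega)]
        · rw [if_neg (by omega), if_neg h0, if_neg (by omega), if_neg (by omega)]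
  rw [Finset.sum_congr rfl h1, Finset.sum_add_distrib, Finset.sum_add_distrib]
  have h3 : ∑ j ∈ Finset.range n, (if j = 0 then 1 else 0) = 1 := by
    rw [Finset.sum_ite_eq' (Finset.range n) 0 (fun _ => 1)]
    rw [if_pos (Finset.mem_range.2 (by omega))]
  have h4 : ∑ j ∈ Finset.range n, (if j % 2 = 1 ∧ j ≤ a then 1 else 0) = (a+1)/2 := by
    rw [← Finset.card_filter]
    have : (Finset.range n).filter (fun j => j % 2 = 1 ∧ j ≤ a)
        = (Finset.range (a+1)).filter (fun j => j % 2 = 1) := by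
      ext j
      simp only [Finset.mem_filter, Finset.mem_range]
      omega
    rw [this, card_odd_range]
  have h5 : ∑ j ∈ Finset.range n, (if j % 2 = 0 ∧ a < j then 1 else 0) = (n+1)/2 - (a+2)/2 := by
    rw [← Finset.card_filter]
    have : (Finset.range n).filter (fun j => j % 2 = 0 ∧ a < j)
        = ((Finset.range n).filter (fun j => j % 2 = 0))
          \ ((Finset.range (a+1)).filter (fun j => j % 2 = 0)) := by
      ext j
      simp only [Finset.mem_sdiff, Finset.mem_filter, Finset.mem_range]
      omega
    rw [this, Finset.card_sdiff_of_subset]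
    · rw [card_even_range, card_even_range]
    · intro j hj
      simp only [Finset.mem_filter, Finset.mem_range] at hj ⊢
      omega
  rw [h3, h4, h5]
  omega

end

lemma letD_ne_letC : letD ≠ letC := by simp [letD, letC]

lemma letter_eq_AB (v : Bool × Bool) (h1 : v ≠ letC) (h2 : v ≠ letD) : v = AB v.1 := by
  rcases v with ⟨a, b⟩
  cases a <;> cases b <;> simp_all [letC, letD, AB]

lemma AB_forced (c₁ c : Bool)
    (h : ((AB c₁).1 = true ∨ (AB c).1 = true) ∧ ((AB c₁).2 = true ∨ (AB c).2 = true)) :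
    c = !c₁ := by
  cases c₁ <;> cases c <;> simp_all [AB]

lemma decide_sub_parity (u v : ℕ) (h : v ≤ u) :
    decide ((u - v) % 2 = 1) = xor (decide (u % 2 = 1)) (decide (v % 2 = 1)) := by
  rcases Nat.mod_two_eq_zero_or_one u with h1 | h1 <;>
    rcases Nat.mod_two_eq_zero_or_one v with h2 | h2 <;>
  · first
    | (have h3 : (u - v) % 2 = 0 := by omega
       simp [h1, h2, h3])
    | (have h3 : (u - v) % 2 = 1 := by omega
       simp [h1, h2, h3])

section
variable {n : ℕ} [NeZero n]

lemma natCast_eq_zero_iff' (j : ℕ) : ((j : ZMod n) = 0) ↔ n ∣ j :=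
  ZMod.natCast_eq_zero_iff j n

lemma natCast_injOn_lt {j₁ j₂ : ℕ} (h1 : j₁ < n) (h2 : j₂ < n)
    (h : (j₁ : ZMod n) = (j₂ : ZMod n)) : j₁ = j₂ := by
  have := congrArg ZMod.val h
  rwa [ZMod.val_natCast, ZMod.val_natCast, Nat.mod_eq_of_lt h1, Nat.mod_eq_of_lt h2] at this

lemma domW_C {w : ZMod n → Bool × Bool} (hd : DomW n w) {i : ZMod n} (hi : w i = letC) :
    ((w (i-1)).1 = true ∨ (w (i+1)).1 = true) ∧ ((w (i-1)).2 = true ∨ (w (i+1)).2 = true) := by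
  have := hd i
  rw [hi] at this
  simpa [letC] using this

lemma no_CCC {w : ZMod n → Bool × Bool} (hd : DomW n w) {i : ZMod n}
    (h1 : w (i-1) = letC) (h2 : w i = letC) (h3 : w (i+1) = letC) : False := by
  have := domW_C hd h2
  rw [h1, h3] at this
  simp [letC] at this

lemma CC_flank {w : ZMod n → Bool × Bool} (hd : DomW n w) {i : ZMod n}
    (h1 : w i = letC) (h2 : w (i+1) = letC) : w (i-1) = letD ∧ w (i+2) = letD := by
  constructor
  · have := domW_C hd h1
    rw [h2] at this
    simp only [letC] at this
    have ha : (w (i-1)).1 = true := by tauto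
    have hb : (w (i-1)).2 = true := by tauto
    show w (i-1) = (true, true)
    exact Prod.ext ha hb
  · have := domW_C hd h2
    have e1 : i + 1 - 1 = i := by ring
    have e2 : i + 1 + 1 = i + 2 := by ring
    rw [e1, e2, h1] at this
    simp only [letC] at this
    have ha : (w (i+2)).1 = true := by tauto
    have hb : (w (i+2)).2 = true := by tauto
    show w (i+2) = (true, true)
    exact Prod.ext ha hb

/-- bounded alternation chain -/
lemma alt_chain_bounded (w : ZMod n → Bool × Bool)
    (hC : ∀ i, ¬(w i = letC ∧ w (i+1) = letC)) (base : ZMod n) (m : ℕ)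
    (havoid : ∀ j, 1 ≤ j → j < m → ¬ (¬(w (base + (j:ℕ)) = letC) ∧ ¬(w (base + (j:ℕ) + 1) = letC)))
    (h1 : ¬ (w (base + ((1:ℕ) : ZMod n)) = letC)) :
    ∀ j, 1 ≤ j → j ≤ m → (¬(w (base + (j:ℕ)) = letC) ↔ j % 2 = 1) := by
  intro j hj
  induction j, hj using Nat.le_induction with
  | base => intro _; simpa using h1
  | succ j hj ih =>
    intro hjm
    have ihh := ih (by omega)
    have hcast : base + ((j+1:ℕ) : ZMod n) = (base + (j:ℕ)) + 1 := by push_cast; ring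
    rw [hcast]
    by_cases hc : w (base + (j:ℕ)) = letC
    · have hnext : ¬ (w ((base + (j:ℕ)) + 1) = letC) := fun h => hC _ ⟨hc, h⟩
      have hjodd : ¬ (j % 2 = 1) := by
        intro h; exact (ihh.2 h) hc
      exact iff_of_true hnext (by omega)
    · have hjodd : j % 2 = 1 := ihh.1 hc
      have hnext : w ((base + (j:ℕ)) + 1) = letC := by
        by_contra hn
        exact havoid j (by omega) (by omega) ⟨hc, hn⟩
      exact iff_of_false (by simpa using hnext) (by omega)

/-- letter chain: letters at odd offsets alternate between `A` and `B`. -/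
lemma letter_chain (w : ZMod n → Bool × Bool) (hd : DomW n w) (base : ZMod n) (m : ℕ)
    (hCs : ∀ j, 2 ≤ j → j ≤ m → j % 2 = 0 → w (base + (j:ℕ)) = letC)
    (hLs : ∀ j, 1 ≤ j → j ≤ m → j % 2 = 1 → w (base + (j:ℕ)) ≠ letC ∧ w (base + (j:ℕ)) ≠ letD) :
    ∀ u, 2*u+1 ≤ m →
      w (base + ((2*u+1 : ℕ) : ZMod n)) = AB (xor ((w (base + ((1:ℕ) : ZMod n))).1) (decide (u % 2 = 1))) := by
  intro u
  induction u with
  | zero =>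
    intro hu
    have := hLs 1 le_rfl (by omega) (by omega)
    have h := letter_eq_AB _ this.1 this.2
    simpa using h
  | succ u ih =>
    intro hu
    have ihh := ih (by omega)
    have hCmid : w (base + ((2*u+2 : ℕ) : ZMod n)) = letC := hCs (2*u+2) (by omega) (by omega) (by omega)
    have hnb := domW_C hd hCmid
    have e1 : base + ((2*u+2 : ℕ) : ZMod n) - 1 = base + ((2*u+1 : ℕ) : ZMod n) := by push_cast; ring
    have e2 : base + ((2*u+2 : ℕ) : ZMod n) + 1 = base + ((2*u+3 : ℕ) : ZMod n) := by push_cast; ring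
    rw [e1, e2, ihh] at hnb
    have hlet := hLs (2*u+3) (by omega) (by omega) (by omega)
    have hABr := letter_eq_AB _ hlet.1 hlet.2
    rw [hABr] at hnb
    have hforced := AB_forced _ _ hnb
    have e3 : (2*(u+1)+1 : ℕ) = 2*u+3 := by ring
    rw [e3, hABr, hforced, ← xor_not_right', ← decide_succ_mod_two]
end

section
variable {n : ℕ} [NeZero n]

lemma AB_inj {c c' : Bool} (h : AB c = AB c') : c = c' := by
  cases c <;> cases c' <;> simp_all [AB]

lemma classifyII (hn : 10 ≤ n) (hev : n % 2 = 0) (w : ZMod n → Bool × Bool) (hd : DomW n w)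
    (hC : ∀ i, ¬(w i = letC ∧ w (i+1) = letC)) (hnD : ∀ i, w i ≠ letD)
    (p q : ZMod n) (hpq : p ≠ q)
    (hRR : ∀ i, (¬(w i = letC) ∧ ¬(w (i+1) = letC)) ↔ (i = p ∨ i = q)) :
    ((q - p).val) % 2 = 1 ∧ w = wII n p q ((w p).1) ((w (p+1)).1) := by
  set a := (q - p).val with hadef
  have halt : a < n := ZMod.val_lt _
  have ha0 : a ≠ 0 := by
    intro h
    exact hpq (by
      have : q - p = 0 := by rwa [← ZMod.val_eq_zero]
      have := sub_eq_zero.1 this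
      exact this.symm)
  have hqp : q = p + (a : ℕ) := by
    rw [hadef, ZMod.natCast_val, ZMod.cast_id]; ring
  have hpq2 : p = q + ((n - a : ℕ) : ZMod n) := by
    rw [Nat.cast_sub (le_of_lt halt), ZMod.natCast_self, zero_sub, hadef,
      ZMod.natCast_val, ZMod.cast_id]
    ring
  have hp1 : ¬ (w p = letC) := ((hRR p).2 (Or.inl rfl)).1
  have hp2 : ¬ (w (p+1) = letC) := ((hRR p).2 (Or.inl rfl)).2
  have hq1 : ¬ (w q = letC) := ((hRR q).2 (Or.inr rfl)).1
  have hq2 : ¬ (w (q+1) = letC) := ((hRR q).2 (Or.inr rfl)).2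
  -- membership alternation on the `p`-side
  have claim1 : ∀ j, 1 ≤ j → j ≤ a → (¬(w (p + (j:ℕ)) = letC) ↔ j % 2 = 1) := by
    refine alt_chain_bounded w hC p a ?_ (by simpa using hp2)
    intro j hj1 hj2 hb
    have hcast : p + ((j:ℕ) : ZMod n) + 1 = p + ((j+1 : ℕ) : ZMod n) := by push_cast; ring
    rw [hcast] at hb
    rcases (hRR (p + (j:ℕ))).1 ⟨hb.1, by
        have : p + ((j+1:ℕ) : ZMod n) = p + (j:ℕ) + 1 := by push_cast; ring
        rw [← this]; exact hb.2⟩ with h | h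
    · have : (j : ZMod n) = 0 := by
        have := add_left_cancel (a := p) (b := ((j:ℕ) : ZMod n)) (c := 0) (by rw [add_zero]; exact h)
        exact this
      rw [natCast_eq_zero_iff'] at this
      have := Nat.le_of_dvd (by omega) this
      omega
    · rw [hqp] at h
      have := add_left_cancel h
      have := natCast_injOn_lt (by omega) halt this
      omega
  have haodd : a % 2 = 1 := by
    have h := (claim1 a (by omega) le_rfl).1
    rw [← hqp] at h
    exact h hq1
  -- membership alternation on the `q`-side
  have claim2 : ∀ j, 1 ≤ j → j ≤ n - a → (¬(w (q + (j:ℕ)) = letC) ↔ j % 2 = 1) := by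
    refine alt_chain_bounded w hC q (n - a) ?_ (by simpa using hq2)
    intro j hj1 hj2 hb
    have hcast : q + ((j:ℕ) : ZMod n) + 1 = q + ((j+1 : ℕ) : ZMod n) := by push_cast; ring
    rw [hcast] at hb
    rcases (hRR (q + (j:ℕ))).1 ⟨hb.1, by
        have : q + ((j+1:ℕ) : ZMod n) = q + (j:ℕ) + 1 := by push_cast; ring
        rw [← this]; exact hb.2⟩ with h | h
    · rw [hpq2] at h
      have := add_left_cancel h
      have := natCast_injOn_lt (by omega) (by omega) this
      omega
    · have : (j : ZMod n) = 0 := by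
        have := add_left_cancel (a := q) (b := ((j:ℕ) : ZMod n)) (c := 0) (by rw [add_zero]; exact h)
        exact this
      rw [natCast_eq_zero_iff'] at this
      have := Nat.le_of_dvd (by omega) this
      omega
  set x := (w p).1 with hxdef
  set y := (w (p+1)).1 with hydef
  have hpAB : w p = AB x := letter_eq_AB _ hp1 (hnD p)
  have hp1AB : w (p+1) = AB y := letter_eq_AB _ hp2 (hnD (p+1))
  -- letter chains
  have chain3 : ∀ u, 2*u+1 ≤ a →
      w (p + ((2*u+1 : ℕ) : ZMod n)) = AB (xor y (decide (u % 2 = 1))) := by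
    intro u hu
    have := letter_chain w hd p a ?_ ?_ u hu
    · rw [this]
      congr 2
      rw [hydef]
      congr 2
      push_cast; ring
    · intro j hj1 hj2 hj3
      by_contra hne
      exact absurd ((claim1 j (by omega) hj2).1 hne) (by omega)
    · intro j hj1 hj2 hj3
      exact ⟨(claim1 j hj1 hj2).2 hj3, hnD _⟩
  set y' := (w (q+1)).1 with hy'def
  have chain4 : ∀ u, 2*u+1 ≤ n - a →
      w (q + ((2*u+1 : ℕ) : ZMod n)) = AB (xor y' (decide (u % 2 = 1))) := by
    intro u hu
    have := letter_chain w hd q (n - a) ?_ ?_ u hu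
    · rw [this]
      congr 2
      rw [hy'def]
      congr 2
      push_cast; ring
    · intro j hj1 hj2 hj3
      by_contra hne
      exact absurd ((claim2 j (by omega) hj2).1 hne) (by omega)
    · intro j hj1 hj2 hj3
      exact ⟨(claim2 j hj1 hj2).2 hj3, hnD _⟩
  -- closing relation determines `y'` from `x`
  set ustar := (n - a - 1)/2 with hustardef
  have hustar : 2*ustar + 1 = n - a := by omega
  set dstar := decide (ustar % 2 = 1) with hdstardef
  have hclose : AB (xor y' dstar) = AB x := by
    have h4 := chain4 ustar (by omega)
    rw [hustar, ← hdstardef] at h4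
    rw [← h4, ← hpq2]
    exact hpAB
  have hy' : y' = xor x dstar := by
    have h := AB_inj hclose
    have : y' = xor (xor y' dstar) dstar := by cases y' <;> cases dstar <;> rfl
    rw [this, h]
  refine ⟨haodd, ?_⟩
  funext i
  obtain ⟨e, he, hi⟩ : ∃ e, e < n ∧ i = p + ((e:ℕ) : ZMod n) :=
    ⟨(i-p).val, ZMod.val_lt _, exists_offset p i⟩
  subst hi
  have heval : wII n p q x y (p + ((e:ℕ) : ZMod n)) = fII n a x y e := by
    rw [wII]
    simp only [add_sub_cancel_left, ZMod.val_natCast, ← hadef]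
    rw [Nat.mod_eq_of_lt he]
  rw [heval]
  by_cases hlet : e = 0 ∨ (e % 2 = 1 ∧ e ≤ a) ∨ (e % 2 = 0 ∧ a < e)
  · rcases hlet with h0 | ⟨h1, h2⟩ | ⟨h1, h2⟩
    · subst h0
      have : fII n a x y 0 = AB x := by rw [fII, if_pos rfl]
      rw [this]
      simpa using hpAB
    · obtain ⟨u, hu⟩ : ∃ u, e = 2*u+1 := ⟨(e-1)/2, by omega⟩
      subst hu
      have hfII : fII n a x y (2*u+1) = AB (xor y (decide ((((2*u+1)-1)/2) % 2 = 1))) := by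
        rw [fII, if_neg (by omega), if_pos (by omega), if_pos h2]
      have hsim : ((2*u+1)-1)/2 = u := by omega
      rw [hsim] at hfII
      rw [hfII, chain3 u h2]
    · obtain ⟨u, hu⟩ : ∃ u, e - a = 2*u+1 := ⟨(e-a-1)/2, by omega⟩
      have hiq : p + ((e:ℕ) : ZMod n) = q + ((2*u+1 : ℕ) : ZMod n) := by
        rw [hqp]
        have : a + (2*u+1) = e := by omega
        rw [← this]
        push_cast; ring
      have hfII : fII n a x y e = AB (xor x (decide (((n - e)/2) % 2 = 1))) := by
        rw [fII, if_neg (by omega), if_neg (by omega), if_pos h2]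
      rw [hfII, hiq, chain4 u (by omega), hy']
      have hd2 : decide (((n-e)/2) % 2 = 1) = xor dstar (decide (u % 2 = 1)) := by
        have h1 : (n - e)/2 = ustar - u := by omega
        rw [h1, decide_sub_parity ustar u (by omega), hdstardef]
      rw [hd2]
      congr 1
      cases x <;> cases dstar <;> cases (decide (u % 2 = 1)) <;> rfl
  · rw [fII_C_cases (n := n) a x y e hlet]
    push_neg at hlet
    obtain ⟨h0, h1, h2⟩ := hlet
    rcases Nat.mod_two_eq_zero_or_one e with hp' | hp'
    · -- even, 1 ≤ e ≤ a : a C position by claim1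
      have hea : e ≤ a := by have := h2 hp'; omega
      by_contra hne
      exact absurd ((claim1 e (by omega) hea).1 hne) (by omega)
    · -- odd, e > a : a C position by claim2
      have hea : a < e := by have := h1 hp'; omega
      set j := e - a with hjdef
      have hiq : p + ((e:ℕ) : ZMod n) = q + ((j:ℕ) : ZMod n) := by
        rw [hqp]
        have : a + j = e := by omega
        rw [← this]
        push_cast; ring
      rw [hiq]
      by_contra hne
      exact absurd ((claim2 j (by omega) (by omega)).1 hne) (by omega)

end

section
variable {n : ℕ} [NeZero n]

lemma bits_split (v : Bool × Bool) :
    bits v = (if ¬(v = letC) then 1 else 0) + (if v = letD then 1 else 0) := by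
  rcases v with ⟨a, b⟩
  cases a <;> cases b <;> simp [bits, letC, letD]

lemma classify (hn : 10 ≤ n) (hmod : n % 4 = 2) (w : ZMod n → Bool × Bool)
    (hd : DomW n w) (hwt : wt n w = n/2 + 1) :
    (∃ q s, w = wI n q s) ∨
    (∃ p q x y, p.val < q.val ∧ ((q - p).val) % 2 = 1 ∧ w = wII n p q x y) := by
  classical
  set Ks := Finset.univ.filter (fun i : ZMod n => ¬(w i = letC)) with hKs
  set Cs := Finset.univ.filter (fun i : ZMod n => w i = letC) with hCs
  set Ds := Finset.univ.filter (fun i : ZMod n => w i = letD) with hDs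
  set CCs := Finset.univ.filter (fun i : ZMod n => w i = letC ∧ w (i+1) = letC) with hCCs
  set RRs := Finset.univ.filter (fun i : ZMod n => ¬(w i = letC) ∧ ¬(w (i+1) = letC)) with hRRs
  set Xs := Finset.univ.filter (fun i : ZMod n => w i = letC ∧ ¬(w (i+1) = letC)) with hXs
  have e2 : Cs.card + Ks.card = n := by
    rw [hCs, hKs, Finset.card_filter_add_card_filter_not (fun i => w i = letC),
      Finset.card_univ, ZMod.card]
  have e3 : Ks.card + Ds.card = n/2 + 1 := by
    rw [← hwt, wt, hKs, hDs, Finset.card_filter, Finset.card_filter, ← Finset.sum_add_distrib]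
    exact (Finset.sum_congr rfl (fun i _ => bits_split (w i))).symm
  have eshift : (Finset.univ.filter (fun i : ZMod n => ¬(w (i+1) = letC))).card = Ks.card := by
    rw [hKs]
    exact card_filter_shift (fun i => ¬(w i = letC)) 1
  have esplit1 : (Finset.univ.filter (fun i : ZMod n => ¬(w (i+1) = letC))) = RRs ∪ Xs := by
    rw [hRRs, hXs]
    ext i
    simp only [Finset.mem_filter, Finset.mem_union, Finset.mem_univ, true_and]
    tauto
  have edisj1 : Disjoint RRs Xs := by
    rw [hRRs, hXs, Finset.disjoint_left]
    intro i h1 h2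
    simp only [Finset.mem_filter, Finset.mem_univ, true_and] at h1 h2
    tauto
  have ecard1 : Ks.card = RRs.card + Xs.card := by
    rw [← eshift, esplit1, Finset.card_union_of_disjoint edisj1]
  have esplit2 : Cs = CCs ∪ Xs := by
    rw [hCs, hCCs, hXs]
    ext i
    simp only [Finset.mem_filter, Finset.mem_union, Finset.mem_univ, true_and]
    tauto
  have edisj2 : Disjoint CCs Xs := by
    rw [hCCs, hXs, Finset.disjoint_left]
    intro i h1 h2
    simp only [Finset.mem_filter, Finset.mem_univ, true_and] at h1 h2
    tauto
  have ecard2 : Cs.card = CCs.card + Xs.card := by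
    rw [esplit2, Finset.card_union_of_disjoint edisj2]
  have e4 : CCs.card ≤ Ds.card := by
    refine Finset.card_le_card_of_injOn (fun i => i + 2) ?_ ?_
    · intro i hi
      rw [hCCs] at hi
      simp only [Finset.mem_coe, Finset.mem_filter, Finset.mem_univ, true_and] at hi
      rw [hDs]
      simp only [Finset.mem_coe, Finset.mem_filter, Finset.mem_univ, true_and]
      exact (CC_flank hd hi.1 hi.2).2
    · intro i _ j _ h
      simpa using h
  have h3ne : ((3:ℕ) : ZMod n) ≠ 0 := by
    rw [Ne, natCast_eq_zero_iff']
    intro h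
    have := Nat.le_of_dvd (by omega) h
    omega
  have h6ne : ((6:ℕ) : ZMod n) ≠ 0 := by
    rw [Ne, natCast_eq_zero_iff']
    intro h
    have := Nat.le_of_dvd (by omega) h
    omega
  -- key numerology
  have hd2 : Ds.card ≤ 2 := by omega
  have hCCtwoD : ∀ i ∈ CCs, ({i - 1, i + 2} : Finset (ZMod n)) ⊆ Ds ∧ (i:ZMod n) - 1 ≠ i + 2 := by
    intro i hi
    rw [hCCs] at hi
    simp only [Finset.mem_filter, Finset.mem_univ, true_and] at hi
    obtain ⟨hD1, hD2⟩ := CC_flank hd hi.1 hi.2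
    constructor
    · intro z hz
      simp only [Finset.mem_insert, Finset.mem_singleton] at hz
      rw [hDs]
      simp only [Finset.mem_filter, Finset.mem_univ, true_and]
      rcases hz with h | h <;> rw [h]
      · exact hD1
      · exact hD2
    · intro h
      apply h3ne
      push_cast
      linear_combination -h
  have hCC_small : CCs.card ≠ 0 → 2 ≤ Ds.card := by
    intro h
    obtain ⟨i, hi⟩ := Finset.card_ne_zero.1 h
    obtain ⟨hsub, hne⟩ := hCCtwoD i hi
    calc 2 = ({i - 1, i + 2} : Finset (ZMod n)).card := by
            rw [Finset.card_insert_of_notMem (by simpa using hne), Finset.card_singleton]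
      _ ≤ Ds.card := Finset.card_le_card hsub
  -- rule out exactly two `D`s
  have hDne2 : Ds.card ≠ 2 := by
    intro hD2'
    have hP2 : CCs.card = 2 := by omega
    obtain ⟨i, j, hij, hCCeq⟩ := Finset.card_eq_two.1 hP2
    have hi : i ∈ CCs := by rw [hCCeq]; simp
    have hj : j ∈ CCs := by rw [hCCeq]; simp
    obtain ⟨hsubi, hnei⟩ := hCCtwoD i hi
    obtain ⟨hsubj, hnej⟩ := hCCtwoD j hj
    have hpaircard : ({i - 1, i + 2} : Finset (ZMod n)).card = 2 := by
      rw [Finset.card_insert_of_notMem (by simpa using hnei), Finset.card_singleton]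
    have hDseq : ({i - 1, i + 2} : Finset (ZMod n)) = Ds :=
      Finset.eq_of_subset_of_card_le hsubi (by omega)
    have hj1 : j - 1 ∈ ({i - 1, i + 2} : Finset (ZMod n)) := by
      rw [hDseq]; exact hsubj (by simp)
    have hj2 : j + 2 ∈ ({i - 1, i + 2} : Finset (ZMod n)) := by
      rw [hDseq]; exact hsubj (by simp)
    simp only [Finset.mem_insert, Finset.mem_singleton] at hj1 hj2
    rcases hj1 with h1 | h1
    · exact hij (by linear_combination -h1)
    · rcases hj2 with h2 | h2
      · apply h6ne
        push_cast
        linear_combination h2 - h1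
      · exact hij (by linear_combination -h2)
  rcases Nat.lt_or_ge Ds.card 1 with hD0 | hD1'
  · -- no `D`s : type II
    have hD0' : Ds.card = 0 := by omega
    have hP0 : CCs.card = 0 := by omega
    have hR2 : RRs.card = 2 := by omega
    have hnD : ∀ i, w i ≠ letD := by
      intro i hi
      have : i ∈ Ds := by rw [hDs]; simp [hi]
      rw [Finset.card_eq_zero.1 hD0'] at this
      simp at this
    have hCC : ∀ i, ¬(w i = letC ∧ w (i+1) = letC) := by
      intro i hi
      have : i ∈ CCs := by rw [hCCs]; simp [hi.1, hi.2]
      rw [Finset.card_eq_zero.1 hP0] at this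
      simp at this
    obtain ⟨p₀, q₀, hne, hRReq⟩ := Finset.card_eq_two.1 hR2
    have hRRiff : ∀ i, (¬(w i = letC) ∧ ¬(w (i+1) = letC)) ↔ (i = p₀ ∨ i = q₀) := by
      intro i
      have : i ∈ RRs ↔ i ∈ ({p₀, q₀} : Finset (ZMod n)) := by rw [hRReq]
      simpa [hRRs, Finset.mem_filter, Finset.mem_insert, Finset.mem_singleton] using this
    have hvalne : p₀.val ≠ q₀.val := by
      intro h
      apply hne
      have h1 : ((p₀.val : ℕ) : ZMod n) = p₀ := by rw [ZMod.natCast_val, ZMod.cast_id]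
      have h2 : ((q₀.val : ℕ) : ZMod n) = q₀ := by rw [ZMod.natCast_val, ZMod.cast_id]
      rw [← h1, ← h2, h]
    rcases Nat.lt_or_ge p₀.val q₀.val with hlt | hge
    · obtain ⟨hparity, heq⟩ := classifyII hn (by omega) w hd hCC hnD p₀ q₀ hne hRRiff
      exact Or.inr ⟨p₀, q₀, _, _, hlt, hparity, heq⟩
    · have hRRiff' : ∀ i, (¬(w i = letC) ∧ ¬(w (i+1) = letC)) ↔ (i = q₀ ∨ i = p₀) := by
        intro i; rw [hRRiff]; tauto
      obtain ⟨hparity, heq⟩ := classifyII hn (by omega) w hd hCC hnD q₀ p₀ (Ne.symm hne) hRRiff'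
      exact Or.inr ⟨q₀, p₀, _, _, by omega, hparity, heq⟩
  · -- exactly one `D` : type I
    have hD1 : Ds.card = 1 := by
      rcases Nat.lt_or_ge Ds.card 2 with h | h
      · omega
      · exfalso
        have : Ds.card = 2 := by omega
        exact hDne2 this
    have hP0 : CCs.card = 0 := by
      by_contra h
      have := hCC_small h
      omega
    have hR0 : RRs.card = 0 := by omega
    obtain ⟨q, hDq⟩ := Finset.card_eq_one.1 hD1
    have hq : w q = letD := by
      have : q ∈ Ds := by rw [hDq]; simp
      rw [hDs] at this
      simpa using this
    have huniq : ∀ i, w i = letD → i = q := by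
      intro i hi
      have : i ∈ Ds := by rw [hDs]; simp [hi]
      rw [hDq] at this
      simpa using this
    have halt : ∀ i, (w (i+1) = letC ↔ ¬ (w i = letC)) := by
      intro i
      have hnotCC : ¬(w i = letC ∧ w (i+1) = letC) := by
        intro hcc
        have : i ∈ CCs := by rw [hCCs]; simp [hcc.1, hcc.2]
        rw [Finset.card_eq_zero.1 hP0] at this
        simp at this
      have hnotRR : ¬(¬(w i = letC) ∧ ¬(w (i+1) = letC)) := by
        intro hrr
        have : i ∈ RRs := by rw [hRRs]; simp [hrr.1, hrr.2]
        rw [Finset.card_eq_zero.1 hR0] at this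
        simp at this
      tauto
    have claimA : ∀ j : ℕ, (w (q + (j:ℕ)) = letC ↔ j % 2 = 1) := by
      intro j
      induction j with
      | zero =>
        simp only [Nat.cast_zero, add_zero]
        rw [hq]
        simp [letD, letC]
      | succ j ih =>
        have hcast : q + ((j+1:ℕ) : ZMod n) = (q + (j:ℕ)) + 1 := by push_cast; ring
        rw [hcast, halt, ih]
        omega
    have hnD' : ∀ j : ℕ, 1 ≤ j → j < n → w (q + (j:ℕ)) ≠ letD := by
      intro j hj1 hj2 hDD
      have := huniq _ hDD
      have hz : ((j:ℕ) : ZMod n) = 0 := by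
        have := add_left_cancel (a := q) (b := ((j:ℕ) : ZMod n)) (c := 0)
          (by rw [add_zero]; exact this)
        exact this
      rw [natCast_eq_zero_iff'] at hz
      have := Nat.le_of_dvd (by omega) hz
      omega
    set s := !((w (q + ((2:ℕ) : ZMod n))).1) with hsdef
    have claimB : ∀ u, 1 ≤ u → 2*u ≤ n - 2 →
        w (q + ((2*u : ℕ) : ZMod n)) = AB (xor s (decide (u % 2 = 1))) := by
      have hchain := letter_chain w hd (q + 1) (n - 3) ?_ ?_
      · intro u hu1 hu2
        have hu' : 2*(u-1)+1 ≤ n - 3 := by omega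
        have := hchain (u-1) hu'
        have hcast1 : q + 1 + ((2*(u-1)+1 : ℕ) : ZMod n) = q + ((2*u : ℕ) : ZMod n) := by
          have : 2*(u-1)+1 = 2*u - 1 := by omega
          rw [this]
          push_cast [Nat.cast_sub (by omega : 1 ≤ 2*u)]
          ring
        have hcast2 : q + 1 + ((1:ℕ) : ZMod n) = q + ((2:ℕ) : ZMod n) := by push_cast; ring
        rw [hcast1, hcast2] at this
        rw [this, hsdef]
        congr 1
        have hdu : decide (u % 2 = 1) = !decide ((u-1) % 2 = 1) := by
          have : u = (u-1) + 1 := by omega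
          rw [this, decide_succ_mod_two]
          simp
        rw [hdu]
        cases ((w (q + ((2:ℕ) : ZMod n))).1) <;> cases (decide ((u-1) % 2 = 1)) <;> rfl
      · intro j hj1 hj2 hj3
        have hcast : q + 1 + ((j:ℕ) : ZMod n) = q + ((j+1 : ℕ) : ZMod n) := by push_cast; ring
        rw [hcast]
        exact (claimA (j+1)).2 (by omega)
      · intro j hj1 hj2 hj3
        have hcast : q + 1 + ((j:ℕ) : ZMod n) = q + ((j+1 : ℕ) : ZMod n) := by push_cast; ring
        rw [hcast]
        constructor
        · intro hcc
          have := (claimA (j+1)).1 hcc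
          omega
        · exact hnD' (j+1) (by omega) (by omega)
    refine Or.inl ⟨q, s, ?_⟩
    funext i
    obtain ⟨e, he, hi⟩ : ∃ e, e < n ∧ i = q + ((e:ℕ) : ZMod n) :=
      ⟨(i-q).val, ZMod.val_lt _, exists_offset q i⟩
    subst hi
    have heval : wI n q s (q + ((e:ℕ) : ZMod n)) = fI s e := by
      rw [wI]
      simp only [add_sub_cancel_left, ZMod.val_natCast]
      rw [Nat.mod_eq_of_lt he]
    rw [heval]
    by_cases hodd : e % 2 = 1
    · rw [fI, if_pos hodd]
      exact (claimA e).2 hodd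
    · rcases eq_or_ne e 0 with h0 | h0
      · subst h0
        simp only [Nat.cast_zero, add_zero]
        rw [fI]
        norm_num
        exact hq
      · rw [fI, if_neg hodd, if_neg h0]
        have he2 : 2 ≤ e ∧ e ≤ n - 2 := by omega
        have := claimB (e/2) (by omega) (by omega)
        have hee : 2 * (e/2) = e := by omega
        rw [hee] at this
        exact this

end

section
variable {n : ℕ} [NeZero n]

lemma card_odd_vals :
    (Finset.univ.filter (fun e : ZMod n => e.val % 2 = 1)).card = n / 2 := by
  rw [← card_odd_range n]
  refine Finset.card_nbij' (fun e => e.val) (fun j => (j : ZMod n)) ?_ ?_ ?_ ?_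
  · intro e he
    simp only [Finset.mem_coe, Finset.mem_filter, Finset.mem_univ, true_and] at he
    simp only [Finset.mem_coe, Finset.mem_filter, Finset.mem_range]
    exact ⟨ZMod.val_lt e, he⟩
  · intro j hj
    simp only [Finset.mem_coe, Finset.mem_filter, Finset.mem_range] at hj
    simp only [Finset.mem_coe, Finset.mem_filter, Finset.mem_univ, true_and]
    rw [ZMod.val_natCast, Nat.mod_eq_of_lt hj.1]
    exact hj.2
  · intro e _
    simp only []
    rw [ZMod.natCast_val, ZMod.cast_id]
  · intro j hj
    simp only [Finset.mem_coe, Finset.mem_filter, Finset.mem_range] at hj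
    simp only []
    rw [ZMod.val_natCast, Nat.mod_eq_of_lt hj.1]

/-- the ordered parameter set for type II words -/
def Pset (n : ℕ) [NeZero n] : Finset (ZMod n × ZMod n) :=
  Finset.univ.filter (fun pq => pq.1.val < pq.2.val ∧ ((pq.2 - pq.1).val) % 2 = 1)

lemma val_injective' : Function.Injective (ZMod.val : ZMod n → ℕ) := by
  intro a b h
  have h1 : ((a.val : ℕ) : ZMod n) = a := by rw [ZMod.natCast_val, ZMod.cast_id]
  have h2 : ((b.val : ℕ) : ZMod n) = b := by rw [ZMod.natCast_val, ZMod.cast_id]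
  rw [← h1, ← h2, h]

lemma two_mul_card_Pset (hev : n % 2 = 0) (hpos : 0 < n) :
    2 * (Pset n).card = n * (n / 2) := by
  classical
  set Podd := Finset.univ.filter (fun pq : ZMod n × ZMod n => ((pq.2 - pq.1).val) % 2 = 1)
    with hPodd
  set Pgt := Finset.univ.filter
    (fun pq : ZMod n × ZMod n => pq.2.val < pq.1.val ∧ ((pq.2 - pq.1).val) % 2 = 1) with hPgt
  have hswap : ∀ (a b : ZMod n), a ≠ b → ((b - a).val) % 2 = 1 → ((a - b).val) % 2 = 1 := by
    intro a b hab hodd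
    have hne : b - a ≠ 0 := sub_ne_zero.2 (Ne.symm hab)
    haveI : NeZero (b - a) := ⟨hne⟩
    have : a - b = -(b - a) := by ring
    rw [this, ZMod.val_neg_of_ne_zero]
    have := ZMod.val_lt (b - a)
    have hv0 : (b - a).val ≠ 0 := fun h0 => hne ((ZMod.val_eq_zero _).1 h0)
    omega
  have hsplit : Podd = Pset n ∪ Pgt := by
    rw [hPodd, hPgt, Pset]
    ext ⟨p, q⟩
    simp only [Finset.mem_filter, Finset.mem_univ, true_and, Finset.mem_union]
    constructor
    · intro h
      rcases Nat.lt_trichotomy p.val q.val with hc | hc | hc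
      · exact Or.inl ⟨hc, h⟩
      · exfalso
        have : p = q := val_injective' hc
        subst this
        simp at h
      · exact Or.inr ⟨hc, h⟩
    · rintro (⟨_, h⟩ | ⟨_, h⟩) <;> exact h
  have hdisj : Disjoint (Pset n) Pgt := by
    rw [Pset, hPgt, Finset.disjoint_left]
    rintro ⟨p, q⟩ h1 h2
    simp only [Finset.mem_filter, Finset.mem_univ, true_and] at h1 h2
    omega
  have hcards : (Pset n).card = Pgt.card := by
    refine Finset.card_nbij' (fun pq => (pq.2, pq.1)) (fun pq => (pq.2, pq.1)) ?_ ?_ ?_ ?_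
    · rintro ⟨p, q⟩ h
      simp only [Pset, Finset.mem_coe, Finset.mem_filter, Finset.mem_univ, true_and] at h
      simp only [hPgt, Finset.mem_coe, Finset.mem_filter, Finset.mem_univ, true_and]
      refine ⟨h.1, hswap p q ?_ h.2⟩
      intro hc; subst hc; omega
    · rintro ⟨p, q⟩ h
      simp only [hPgt, Finset.mem_coe, Finset.mem_filter, Finset.mem_univ, true_and] at h
      simp only [Pset, Finset.mem_coe, Finset.mem_filter, Finset.mem_univ, true_and]
      refine ⟨h.1, hswap p q ?_ h.2⟩
      intro hc; subst hc; omega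
    · rintro ⟨p, q⟩ _; rfl
    · rintro ⟨p, q⟩ _; rfl
  have hPoddcard : Podd.card = n * (n / 2) := by
    have hbij : Podd.card = (Finset.univ.filter
        (fun pq : ZMod n × ZMod n => (pq.2.val) % 2 = 1)).card := by
      refine Finset.card_nbij' (fun pq => (pq.1, pq.2 - pq.1)) (fun pq => (pq.1, pq.1 + pq.2))
        ?_ ?_ ?_ ?_
      · rintro ⟨p, q⟩ h
        simp only [hPodd, Finset.mem_coe, Finset.mem_filter, Finset.mem_univ, true_and] at h
        simpa only [Finset.mem_coe, Finset.mem_filter, Finset.mem_univ, true_and] using h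
      · rintro ⟨p, d⟩ h
        simp only [Finset.mem_coe, Finset.mem_filter, Finset.mem_univ, true_and] at h
        simp only [hPodd, Finset.mem_coe, Finset.mem_filter, Finset.mem_univ, true_and]
        simpa using h
      · rintro ⟨p, q⟩ _
        have hinv : p + (q - p) = q := by ring
        simp [hinv]
      · rintro ⟨p, d⟩ _
        have hinv : p + d - p = d := by ring
        simp [hinv]
    rw [hbij]
    have : (Finset.univ.filter (fun pq : ZMod n × ZMod n => (pq.2.val) % 2 = 1))
        = Finset.univ ×ˢ (Finset.univ.filter (fun e : ZMod n => e.val % 2 = 1)) := by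
      ext ⟨p, d⟩
      simp [Finset.mem_product]
    rw [this, Finset.card_product, Finset.card_univ, ZMod.card, card_odd_vals]
  have := Finset.card_union_of_disjoint hdisj
  rw [← hsplit] at this
  omega

end

section
variable {n : ℕ} [NeZero n]

lemma wI_eval (q : ZMod n) (s : Bool) (j : ℕ) :
    wI n q s (q + (j:ℕ)) = fI s (j % n) := by
  rw [wI]
  simp only [add_sub_cancel_left, ZMod.val_natCast]

lemma wII_eval (p q : ZMod n) (x y : Bool) (j : ℕ) :
    wII n p q x y (p + (j:ℕ)) = fII n ((q - p).val) x y (j % n) := by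
  rw [wII]
  simp only [add_sub_cancel_left, ZMod.val_natCast]

lemma fI_eq_letD_iff (s : Bool) (e : ℕ) : fI s e = letD ↔ e = 0 := by
  constructor
  · intro h
    by_contra h0
    rw [fI] at h
    by_cases h1 : e % 2 = 1
    · rw [if_pos h1] at h
      exact letD_ne_letC h.symm
    · rw [if_neg h1, if_neg h0] at h
      exact AB_ne_letD _ h
  · intro h; subst h; rfl

lemma fII_ne_letD (a : ℕ) (x y : Bool) (e : ℕ) : fII n a x y e ≠ letD := by
  by_cases h : e = 0 ∨ (e % 2 = 1 ∧ e ≤ a) ∨ (e % 2 = 0 ∧ a < e)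
  · obtain ⟨c, hc⟩ := fII_letter_cases (n := n) a x y e h
    rw [hc]; exact AB_ne_letD c
  · rw [fII_C_cases (n := n) a x y e h]
    exact fun hc => letD_ne_letC hc.symm

lemma wI_injective (hn : 10 ≤ n) :
    Function.Injective (fun qs : ZMod n × Bool => wI n qs.1 qs.2) := by
  rintro ⟨q, s⟩ ⟨q', s'⟩ h
  simp only [] at h
  have hq : q' = q := by
    have h1 : wI n q s q' = wI n q' s' q' := by rw [h]
    have h2 : wI n q' s' q' = letD := by
      have := wI_eval q' s' 0
      simpa [fI] using this
    rw [h2, wI, fI_eq_letD_iff] at h1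
    have : q' - q = 0 := by rwa [← ZMod.val_eq_zero]
    exact sub_eq_zero.1 this
  rw [hq] at h
  have h2 : wI n q s (q + ((2:ℕ) : ZMod n)) = wI n q s' (q + ((2:ℕ) : ZMod n)) := by rw [h]
  rw [wI_eval, wI_eval, Nat.mod_eq_of_lt (by omega)] at h2
  have hfi : ∀ t : Bool, fI t 2 = AB (xor t true) := fun t => rfl
  rw [hfi, hfi] at h2
  have hss : s = s' := by
    have := AB_inj h2
    cases s <;> cases s' <;> simp_all
  simp only [Prod.mk.injEq]
  exact ⟨hq.symm, hss⟩
  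
lemma fII_ne_letC_iff (a : ℕ) (x y : Bool) (e : ℕ) :
    fII n a x y e ≠ letC ↔ (e = 0 ∨ (e % 2 = 1 ∧ e ≤ a) ∨ (e % 2 = 0 ∧ a < e)) := by
  constructor
  · intro h
    by_contra hc
    exact h (fII_C_cases (n := n) a x y e hc)
  · intro h
    obtain ⟨c, hc⟩ := fII_letter_cases (n := n) a x y e h
    rw [hc]
    exact AB_ne_letC c

/-- the two "double letter" positions of a type II word are exactly `p` and `q`. -/
lemma wII_RR (hn : 10 ≤ n) (hev : n % 2 = 0) (p q : ZMod n) (x y : Bool)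
    (ha : ((q - p).val) % 2 = 1) (i : ZMod n) :
    (wII n p q x y i ≠ letC ∧ wII n p q x y (i+1) ≠ letC) ↔ (i = p ∨ i = q) := by
  set a := (q - p).val with hadef
  have halt : a < n := ZMod.val_lt _
  obtain ⟨e, he, hi⟩ : ∃ e, e < n ∧ i = p + ((e:ℕ) : ZMod n) :=
    ⟨(i-p).val, ZMod.val_lt _, exists_offset p i⟩
  subst hi
  have h1 : wII n p q x y (p + ((e:ℕ) : ZMod n)) = fII n a x y e := by
    rw [wII_eval, Nat.mod_eq_of_lt he, hadef]
  have hcast : p + ((e:ℕ) : ZMod n) + 1 = p + ((e+1:ℕ) : ZMod n) := by push_cast; ring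
  have h2 : wII n p q x y (p + ((e:ℕ) : ZMod n) + 1) = fII n a x y ((e+1) % n) := by
    rw [hcast, wII_eval, hadef]
  rw [h1, h2, fII_ne_letC_iff, fII_ne_letC_iff]
  have hqp : q = p + ((a:ℕ) : ZMod n) := by
    rw [hadef, ZMod.natCast_val, ZMod.cast_id]; ring
  have hip : (p + ((e:ℕ) : ZMod n) = p ↔ e = 0) := by
    constructor
    · intro h
      have : ((e:ℕ) : ZMod n) = 0 := by
        have := add_left_cancel (a := p) (b := ((e:ℕ) : ZMod n)) (c := 0)
          (by rw [add_zero]; exact h)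
        exact this
      rw [natCast_eq_zero_iff'] at this
      rcases Nat.eq_zero_or_pos e with h0 | h0
      · exact h0
      · have := Nat.le_of_dvd h0 this; omega
    · intro h; subst h; simp
  have hiq : (p + ((e:ℕ) : ZMod n) = q ↔ e = a) := by
    rw [hqp]
    constructor
    · intro h
      exact natCast_injOn_lt he halt (add_left_cancel h)
    · intro h; subst h; rfl
  rw [hip, hiq]
  have ha0 : a ≠ 0 := by omega
  rcases eq_or_ne e (n - 1) with hen | hen
  · have hmod0 : (e + 1) % n = 0 := by
      have h4 : e + 1 = n := by omega
      rw [h4, Nat.mod_self]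
    rw [hmod0]
    subst hen
    omega
  · have hmod1 : (e + 1) % n = e + 1 := succ_mod n e (by omega)
    rw [hmod1]
    omega

lemma wII_injOn (hn : 10 ≤ n) (hev : n % 2 = 0) :
    Set.InjOn (fun t : (ZMod n × ZMod n) × Bool × Bool => wII n t.1.1 t.1.2 t.2.1 t.2.2)
      ↑((Pset n) ×ˢ (Finset.univ : Finset (Bool × Bool))) := by
  rintro ⟨⟨p, q⟩, x, y⟩ h1 ⟨⟨p', q'⟩, x', y'⟩ h2 heq
  simp only [Finset.coe_product, Set.mem_prod, Finset.mem_coe, Pset, Finset.mem_filter,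
    Finset.mem_univ, true_and] at h1 h2
  obtain ⟨hlt, hodd⟩ := h1.1
  obtain ⟨hlt', hodd'⟩ := h2.1
  simp only [] at heq
  have hRR : ∀ i : ZMod n, (i = p ∨ i = q) ↔ (i = p' ∨ i = q') := by
    intro i
    rw [← wII_RR hn hev p q x y hodd i, ← wII_RR hn hev p' q' x' y' hodd' i, heq]
  have hpq : p ≠ q := by intro h; subst h; omega
  have hpq' : p' ≠ q' := by intro h; subst h; omega
  have hpp : p = p' ∧ q = q' := by
    rcases (hRR p).1 (Or.inl rfl) with h1' | h1'
    · refine ⟨h1', ?_⟩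
      rcases (hRR q).1 (Or.inr rfl) with h2' | h2'
      · exfalso
        rw [← h1'] at h2'
        exact hpq h2'.symm
      · exact h2'
    · exfalso
      rcases (hRR q).1 (Or.inr rfl) with h2' | h2'
      · subst h1' h2'
        omega
      · rw [← h2'] at h1'
        exact hpq h1'
  obtain ⟨hpp', hqq'⟩ := hpp
  subst hpp' hqq'
  have hx : x = x' := by
    have h1' : wII n p q x y (p + ((0:ℕ) : ZMod n)) = wII n p q x' y' (p + ((0:ℕ) : ZMod n)) := by
      rw [heq]
    rw [wII_eval, wII_eval, Nat.zero_mod] at h1'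
    have hf : ∀ t t' : Bool, fII n ((q-p).val) t t' 0 = AB t := fun _ _ => rfl
    rw [hf, hf] at h1'
    exact AB_inj h1'
  have hy : y = y' := by
    have h1' : wII n p q x y (p + ((1:ℕ) : ZMod n)) = wII n p q x' y' (p + ((1:ℕ) : ZMod n)) := by
      rw [heq]
    rw [wII_eval, wII_eval, Nat.mod_eq_of_lt (by omega)] at h1'
    have ha1 : 1 ≤ (q - p).val := by omega
    have hf : ∀ t t' : Bool, fII n ((q-p).val) t t' 1 = AB t' := by
      intro t t'
      rw [fII, if_neg (by omega), if_pos (by omega), if_pos ha1]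
      norm_num
    rw [hf, hf] at h1'
    exact AB_inj h1'
  rw [hx, hy]

lemma wI_ne_wII (hn : 10 ≤ n) (q₀ : ZMod n) (s : Bool) (p q : ZMod n) (x y : Bool) :
    wI n q₀ s ≠ wII n p q x y := by
  intro h
  have h1 : wI n q₀ s q₀ = letD := by
    have := wI_eval q₀ s 0
    simpa [fI] using this
  have h2 : wII n p q x y q₀ ≠ letD := by
    rw [wII]
    exact fII_ne_letD _ _ _ _
  rw [h] at h1
  exact h2 h1

end

section
variable {n : ℕ} [NeZero n]

lemma card_sol (hn : 10 ≤ n) (hmod : n % 4 = 2) :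
    {w : ZMod n → Bool × Bool | DomW n w ∧ wt n w = n/2 + 1}.ncard = n * (n + 2) := by
  classical
  have hev : n % 2 = 0 := by omega
  have hseteq : {w : ZMod n → Bool × Bool | DomW n w ∧ wt n w = n/2 + 1}
      = ↑(Finset.univ.filter (fun w : ZMod n → Bool × Bool => DomW n w ∧ wt n w = n/2 + 1)) := by
    ext w; simp
  rw [hseteq, Set.ncard_coe_finset]
  set SolI := Finset.image (fun qs : ZMod n × Bool => wI n qs.1 qs.2) Finset.univ with hSolI
  set SolII := Finset.image (fun t : (ZMod n × ZMod n) × Bool × Bool => wII n t.1.1 t.1.2 t.2.1 t.2.2)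
    ((Pset n) ×ˢ (Finset.univ : Finset (Bool × Bool))) with hSolII
  have hset : (Finset.univ.filter (fun w : ZMod n → Bool × Bool => DomW n w ∧ wt n w = n/2 + 1))
      = SolI ∪ SolII := by
    ext w
    simp only [Finset.mem_filter, Finset.mem_union, Finset.mem_univ, true_and]
    constructor
    · rintro ⟨hdw, hwtw⟩
      rcases classify hn hmod w hdw hwtw with ⟨q, s, rfl⟩ | ⟨p, q, x, y, hlt, hodd, rfl⟩
      · left
        rw [hSolI, Finset.mem_image]
        exact ⟨(q, s), Finset.mem_univ _, rfl⟩
      · right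
        rw [hSolII, Finset.mem_image]
        refine ⟨((p, q), (x, y)), ?_, rfl⟩
        rw [Finset.mem_product]
        refine ⟨?_, Finset.mem_univ _⟩
        rw [Pset, Finset.mem_filter]
        exact ⟨Finset.mem_univ _, hlt, hodd⟩
    · rintro (h | h)
      · rw [hSolI, Finset.mem_image] at h
        obtain ⟨⟨q, s⟩, _, rfl⟩ := h
        exact ⟨domW_wI hn hev q s, wt_wI hn hev q s⟩
      · rw [hSolII, Finset.mem_image] at h
        obtain ⟨⟨⟨p, q⟩, x, y⟩, hmem, rfl⟩ := h
        rw [Finset.mem_product, Pset, Finset.mem_filter] at hmem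
        obtain ⟨⟨_, _, hodd⟩, _⟩ := hmem
        exact ⟨domW_wII hn hev p q x y hodd, wt_wII hn hev p q x y hodd⟩
  have hdisj : Disjoint SolI SolII := by
    rw [Finset.disjoint_left]
    intro w h1 h2
    rw [hSolI, Finset.mem_image] at h1
    rw [hSolII, Finset.mem_image] at h2
    obtain ⟨⟨q₀, s⟩, _, hw1⟩ := h1
    obtain ⟨⟨⟨p, q⟩, x, y⟩, _, hw2⟩ := h2
    exact wI_ne_wII hn q₀ s p q x y (hw1.trans hw2.symm)
  have hcardI : SolI.card = n * 2 := by
    rw [hSolI, Finset.card_image_of_injective _ (wI_injective hn), Finset.card_univ,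
      Fintype.card_prod, ZMod.card, Fintype.card_bool]
  have hcardII : SolII.card = (Pset n).card * 4 := by
    rw [hSolII, Finset.card_image_of_injOn (wII_injOn hn hev), Finset.card_product,
      Finset.card_univ, Fintype.card_prod, Fintype.card_bool]
  have hP2 : 2 * (Pset n).card = n * (n / 2) := two_mul_card_Pset hev (by omega)
  rw [hset, Finset.card_union_of_disjoint hdisj, hcardI, hcardII]
  have hhalf : n / 2 * 2 = n := by omega
  calc n * 2 + (Pset n).card * 4 = n * 2 + (2 * (Pset n).card) * 2 := by ring
    _ = n * 2 + (n * (n/2)) * 2 := by rw [hP2]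
    _ = n * 2 + n * (n/2 * 2) := by ring
    _ = n * 2 + n * n := by rw [hhalf]
    _ = n * (n + 2) := by ring

def ofS (S : Finset (ZMod n × Fin 2)) : ZMod n → Bool × Bool :=
  fun i => (decide ((i, (0 : Fin 2)) ∈ S), decide ((i, (1 : Fin 2)) ∈ S))

lemma colFinset_ofS (S : Finset (ZMod n × Fin 2)) : colFinset n (ofS S) = S := by
  ext ⟨i, r⟩
  simp only [colFinset, Finset.mem_filter, Finset.mem_univ, true_and]
  fin_cases r
  · simp [ofS]
  · simp [ofS]

lemma domNum_eq (hn : 10 ≤ n) (hmod : n % 4 = 2) : domNum n = n/2 + 1 := by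
  have hev : n % 2 = 0 := by omega
  have hmem : (n/2 + 1) ∈ {k | ∃ S : Finset (ZMod n × Fin 2), S.card = k ∧ IsDominatingSet n ↑S} := by
    refine ⟨colFinset n (wI n 0 false), ?_, ?_⟩
    · rw [card_colFinset, wt_wI hn hev]
    · rw [← wordSet_eq]
      exact (isDominating_iff_domW (by omega) _).2 (domW_wI hn hev 0 false)
  refine le_antisymm (Nat.sInf_le hmem) (le_csInf ⟨_, hmem⟩ ?_)
  rintro k ⟨S, hcard, hdom⟩
  have hws : wordSet n (ofS S) = ↑S := by rw [wordSet_eq, colFinset_ofS]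
  have hdw : DomW n (ofS S) := (isDominating_iff_domW (by omega) _).1 (by rw [hws]; exact hdom)
  have hwtS : wt n (ofS S) = k := by
    rw [← card_colFinset, colFinset_ofS, hcard]
  have := wt_lower (ofS S) hdw hmod
  omega

lemma dominion_eq (hn : 10 ≤ n) (hmod : n % 4 = 2) : dominion n = n * (n + 2) := by
  have hseteq : {S : Finset (ZMod n × Fin 2) | S.card = domNum n ∧ IsDominatingSet n ↑S}
      = (colFinset n) '' {w : ZMod n → Bool × Bool | DomW n w ∧ wt n w = n/2 + 1} := by
    ext S
    simp only [Set.mem_setOf_eq, Set.mem_image]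
    constructor
    · rintro ⟨hcard, hdom⟩
      refine ⟨ofS S, ⟨?_, ?_⟩, colFinset_ofS S⟩
      · refine (isDominating_iff_domW (by omega) _).1 ?_
        rw [wordSet_eq, colFinset_ofS]
        exact hdom
      · rw [← card_colFinset, colFinset_ofS, hcard, domNum_eq hn hmod]
    · rintro ⟨w, ⟨hdw, hwtw⟩, rfl⟩
      refine ⟨?_, ?_⟩
      · rw [card_colFinset, hwtw, domNum_eq hn hmod]
      · rw [← wordSet_eq]
        exact (isDominating_iff_domW (by omega) _).2 hdw
  rw [dominion, hseteq, Set.ncard_image_of_injective _ colFinset_injective,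
    card_sol hn hmod]

end

end PrismDom

theorem dominion_mod_two (n : ℕ) (hn : 10 ≤ n) (hmod : n % 4 = 2) :
    dominion n = n * (n + 2) := by
  haveI : NeZero n := ⟨by omega⟩
  exact PrismDom.dominion_eq hn hmod
end
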